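/- arXiv:1912.02563 — 6 statements merged into one kernel-verified Lean document; each statement's English description precedes it below -/
import Mathlib

section
/- For any pointed extended pseudometric space (X, d, x₀) and any p ∈ [1, ∞], the p-Wasserstein distance W_p[d, x₀] is an extended pseudometric on the monoid D(X, x₀) of persistence diagrams: it is nonnegative, vanishes on diagonal pairs, is symmetric, and satisfies the triangle inequality. -/
open scoped ENNReal BigOperators
noncomputable section

/-- An extended pseudometric. -/
structure IsEPMetric {X : Type*} (d : X → X → ℝ≥0∞) : Prop where
  refl : ∀ x, d x x = 0
  symm : ∀ x y, d x y = d y x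
  triangle : ∀ x y z, d x z ≤ d x y + d y z

/-- The ℓ^p norm of a finite tuple of extended nonnegative reals. -/
def lpNorm (p : ℝ≥0∞) {n : ℕ} (v : Fin n → ℝ≥0∞) : ℝ≥0∞ :=
  if p = ∞ then ⨆ i, v i else (∑ i, v i ^ p.toReal) ^ (1 / p.toReal)

variable {X : Type*}

/-- The congruence on the free commutative monoid (multisets) identifying
formal sums that differ by copies of the basepoint. -/
def diagCon (x₀ : X) : AddCon (Multiset X) where
  r s t := ∃ a b : ℕ, s + Multiset.replicate a x₀ = t + Multiset.replicate b x₀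
  iseqv := by
    constructor
    · exact fun s => ⟨0, 0, rfl⟩
    · rintro s t ⟨a, b, h⟩; exact ⟨b, a, h.symm⟩
    · rintro s t u ⟨a, b, h₁⟩ ⟨a', b', h₂⟩
      refine ⟨a + a', b' + b, ?_⟩
      have h3 : s + Multiset.replicate a x₀ + Multiset.replicate a' x₀
          = u + Multiset.replicate b' x₀ + Multiset.replicate b x₀ := by
        rw [h₁, add_right_comm, h₂, add_right_comm]
      simpa [Multiset.replicate_add, add_assoc] using h3
  add' := by
    rintro s t s' t' ⟨a, b, h₁⟩ ⟨a', b', h₂⟩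
    refine ⟨a + a', b + b', ?_⟩
    have h3 : (s + Multiset.replicate a x₀) + (s' + Multiset.replicate a' x₀)
        = (t + Multiset.replicate b x₀) + (t' + Multiset.replicate b' x₀) := by rw [h₁, h₂]
    calc s + s' + Multiset.replicate (a + a') x₀
        = (s + Multiset.replicate a x₀) + (s' + Multiset.replicate a' x₀) := by
          rw [Multiset.replicate_add]; exact add_add_add_comm s s' _ _
      _ = (t + Multiset.replicate b x₀) + (t' + Multiset.replicate b' x₀) := h3
      _ = t + t' + Multiset.replicate (b + b') x₀ := by
          rw [Multiset.replicate_add]; exact (add_add_add_comm t t' _ _).symm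

/-- The monoid of persistence diagrams on a pointed set. -/
abbrev Diagram (X : Type*) (x₀ : X) := (diagCon x₀).Quotient

/-- The canonical map `X → D(X,x₀)`. -/
def diagι (x₀ : X) (x : X) : Diagram X x₀ := (diagCon x₀).mk' {x}

/-- Pad a tuple to length `r` with copies of the basepoint. -/
def padTo (x₀ : X) {n : ℕ} (x : Fin n → X) (r : ℕ) : Fin r → X :=
  fun k => if h : (k : ℕ) < n then x ⟨k, h⟩ else x₀

/-- The minimal ℓ^p matching cost between two tuples of equal length. -/
def matchCost (d : X → X → ℝ≥0∞) (p : ℝ≥0∞) {r : ℕ} (x y : Fin r → X) : ℝ≥0∞ :=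
  ⨅ σ : Equiv.Perm (Fin r), lpNorm p (fun k => d (x k) (y (σ k)))

/-- A tuple enumerating a multiset. -/
def mFun (s : Multiset X) : Fin s.toList.length → X := fun k => s.toList.get k

/-- The p-Wasserstein cost between two multisets, padding both to the combined length. -/
def WpM (d : X → X → ℝ≥0∞) (x₀ : X) (p : ℝ≥0∞) (s t : Multiset X) : ℝ≥0∞ :=
  matchCost d p (padTo x₀ (mFun s) (Multiset.card s + Multiset.card t))
                (padTo x₀ (mFun t) (Multiset.card s + Multiset.card t))

/-- The p-Wasserstein distance on the monoid of persistence diagrams. -/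
def Wp (d : X → X → ℝ≥0∞) (x₀ : X) (p : ℝ≥0∞) (α β : Diagram X x₀) : ℝ≥0∞ :=
  ⨅ (s : Multiset X) (t : Multiset X) (_ : (diagCon x₀).mk' s = α)
    (_ : (diagCon x₀).mk' t = β), WpM d x₀ p s t

/-- The Lipschitz norm of a map between extended pseudometric spaces. -/
def eLipNorm {Y : Type*} (d : X → X → ℝ≥0∞) (ρ : Y → Y → ℝ≥0∞) (f : X → Y) : ℝ≥0∞ :=
  sInf {C : ℝ≥0∞ | ∀ x y, ρ (f x) (f y) ≤ C * d x y}



/-! ### Auxiliary lemmas -/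

section Aux

variable {p : ℝ≥0∞} {n : ℕ}

lemma aux_one_le_toReal (hp : 1 ≤ p) (hne : p ≠ ∞) : 1 ≤ p.toReal := by
  rw [← ENNReal.toReal_one]
  exact ENNReal.toReal_mono hne hp

lemma aux_lpNorm_zero (hp : 1 ≤ p) : lpNorm p (fun _ : Fin n => (0:ℝ≥0∞)) = 0 := by
  rcases eq_or_ne p ∞ with h | h
  · simp [lpNorm, h]
  · have ht : 1 ≤ p.toReal := aux_one_le_toReal hp h
    have h1 : (0:ℝ) < p.toReal := by linarith
    have h2 : (0:ℝ) < 1 / p.toReal := by positivity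
    unfold lpNorm
    rw [if_neg h]
    have hs : (∑ _i : Fin n, (0:ℝ≥0∞) ^ p.toReal) = 0 := by
      simp [ENNReal.zero_rpow_of_pos h1]
    rw [hs, ENNReal.zero_rpow_of_pos h2]

lemma aux_lpNorm_comp_equiv (v : Fin n → ℝ≥0∞) (σ : Equiv.Perm (Fin n)) :
    lpNorm p (v ∘ σ) = lpNorm p v := by
  unfold lpNorm
  rcases eq_or_ne p ∞ with h | h
  · simp only [h, if_true, if_pos]
    exact Equiv.iSup_comp (g := v) σ
  · simp only [h, if_neg, ite_false]
    congr 1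
    exact Fintype.sum_equiv σ _ _ (fun i => rfl)

lemma aux_lpNorm_mono {v w : Fin n → ℝ≥0∞} (h : ∀ i, v i ≤ w i) :
    lpNorm p v ≤ lpNorm p w := by
  unfold lpNorm
  split
  · exact iSup_mono h
  · refine ENNReal.rpow_le_rpow (Finset.sum_le_sum fun i _ => ?_) (by positivity)
    exact ENNReal.rpow_le_rpow (h i) ENNReal.toReal_nonneg

lemma aux_lpNorm_add_le (hp : 1 ≤ p) (v w : Fin n → ℝ≥0∞) :
    lpNorm p (fun i => v i + w i) ≤ lpNorm p v + lpNorm p w := by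
  unfold lpNorm
  rcases eq_or_ne p ∞ with h | h
  · simp only [h, if_true, if_pos]
    exact iSup_le fun i => add_le_add (le_iSup v i) (le_iSup w i)
  · simp only [h, ite_false, if_neg]
    exact ENNReal.Lp_add_le Finset.univ v w (aux_one_le_toReal hp h)

lemma aux_lpNorm_eq_of_padded {r R : ℕ} (hrR : r ≤ R) (hp : 1 ≤ p)
    (v : Fin r → ℝ≥0∞) (w : Fin R → ℝ≥0∞)
    (hlt : ∀ (k : Fin R) (hk : (k:ℕ) < r), w k = v ⟨k, hk⟩)
    (hge : ∀ k : Fin R, r ≤ (k:ℕ) → w k = 0) : lpNorm p w = lpNorm p v := by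
  unfold lpNorm
  rcases eq_or_ne p ∞ with h | h
  · simp only [h, if_true, if_pos]
    apply le_antisymm
    · refine iSup_le fun k => ?_
      by_cases hk : (k:ℕ) < r
      · rw [hlt k hk]; exact le_iSup v _
      · rw [hge k (le_of_not_gt hk)]; exact zero_le
    · refine iSup_le fun i => ?_
      have hi : (i:ℕ) < R := lt_of_lt_of_le i.2 hrR
      have := hlt ⟨i, hi⟩ i.2
      simp only [Fin.eta] at this
      rw [← this]
      exact le_iSup w _
  · have ht : 1 ≤ p.toReal := aux_one_le_toReal hp h
    simp only [h, ite_false, if_neg]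
    congr 1
    have e : r + (R - r) = R := Nat.add_sub_cancel' hrR
    calc ∑ k : Fin R, w k ^ p.toReal
        = ∑ j : Fin (r + (R - r)), w (finCongr e j) ^ p.toReal :=
          (Fintype.sum_equiv (finCongr e) _ _ (fun j => rfl)).symm
      _ = ∑ i : Fin r, w (finCongr e (Fin.castAdd _ i)) ^ p.toReal
          + ∑ i : Fin (R - r), w (finCongr e (Fin.natAdd r i)) ^ p.toReal :=
          Fin.sum_univ_add _
      _ = ∑ i : Fin r, v i ^ p.toReal := by
          have hz : ∑ i : Fin (R - r), w (finCongr e (Fin.natAdd r i)) ^ p.toReal = 0 :=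
            Finset.sum_eq_zero fun i _ => by
              rw [hge _ (by simp), ENNReal.zero_rpow_of_pos (by linarith)]
          rw [hz, add_zero]
          refine Finset.sum_congr rfl fun i _ => ?_
          have hk : ((finCongr e (Fin.castAdd (R - r) i) : Fin R) : ℕ) < r := by simp
          rw [hlt _ hk]
          have hik : (⟨((finCongr e) (Fin.castAdd (R - r) i) : ℕ), hk⟩ : Fin r) = i :=
            Fin.ext (by simp)
          rw [hik]

lemma aux_exists_get_equiv_of_perm {l₁ l₂ : List X} (h : l₁.Perm l₂) :
    ∃ σ : Fin l₁.length ≃ Fin l₂.length, ∀ i : Fin l₁.length, l₁.get i = l₂.get (σ i) := by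
  induction h with
  | nil => exact ⟨Equiv.refl _, fun i => i.elim0⟩
  | cons x h ih =>
      obtain ⟨σ, hσ⟩ := ih
      refine ⟨(finSuccEquiv _).trans ((Equiv.optionCongr σ).trans (finSuccEquiv _).symm), ?_⟩
      intro i
      refine Fin.cases ?_ (fun j => ?_) i
      · simp
      · simpa using hσ j
  | swap x y l =>
      show ∃ σ : Fin (l.length + 2) ≃ Fin (l.length + 2),
        ∀ i : Fin (l.length + 2), (y :: x :: l).get i = (x :: y :: l).get (σ i)
      refine ⟨Equiv.swap 0 1, ?_⟩
      intro i
      refine Fin.cases ?_ (fun j => ?_) i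
      · simp
      · refine Fin.cases ?_ (fun k => ?_) j
        · simp [Fin.succ_zero_eq_one]
        · have h0 : k.succ.succ ≠ (0 : Fin (l.length + 2)) := by simp [Fin.ext_iff]
          have h1 : k.succ.succ ≠ (1 : Fin (l.length + 2)) := by simp [Fin.ext_iff]
          rw [Equiv.swap_apply_of_ne_of_ne h0 h1]
          simp
  | trans h₁ h₂ ih₁ ih₂ =>
      obtain ⟨σ₁, hσ₁⟩ := ih₁
      obtain ⟨σ₂, hσ₂⟩ := ih₂
      exact ⟨σ₁.trans σ₂, fun i => (hσ₁ i).trans (hσ₂ (σ₁ i))⟩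

lemma aux_exists_extend_perm {r R : ℕ} (hrR : r ≤ R) (σ : Equiv.Perm (Fin r)) :
    ∃ τ : Equiv.Perm (Fin R),
      (∀ (k : Fin R) (hk : (k : ℕ) < r), ((τ k : Fin R) : ℕ) = ((σ ⟨k, hk⟩ : Fin r) : ℕ)) ∧
      ∀ k : Fin R, r ≤ (k : ℕ) → τ k = k := by
  classical
  refine ⟨⟨fun k => if h : (k : ℕ) < r then
        ⟨(σ ⟨k, h⟩ : Fin r), lt_of_lt_of_le (σ ⟨k, h⟩).2 hrR⟩ else k,
      fun k => if h : (k : ℕ) < r then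
        ⟨(σ.symm ⟨k, h⟩ : Fin r), lt_of_lt_of_le (σ.symm ⟨k, h⟩).2 hrR⟩ else k,
      fun k => ?_, fun k => ?_⟩, fun k hk => ?_, fun k hk => ?_⟩
  · by_cases h : (k : ℕ) < r
    · simp only [dif_pos h]
      have h2 : ((σ ⟨k, h⟩ : Fin r) : ℕ) < r := (σ ⟨k, h⟩).2
      simp only [dif_pos h2]
      apply Fin.ext
      simp
    · simp only [dif_neg h, dif_neg h]
  · by_cases h : (k : ℕ) < r
    · simp only [dif_pos h]
      have h2 : ((σ.symm ⟨k, h⟩ : Fin r) : ℕ) < r := (σ.symm ⟨k, h⟩).2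
      simp only [dif_pos h2]
      apply Fin.ext
      simp
    · simp only [dif_neg h, dif_neg h]
  · simp only [Equiv.coe_fn_mk, dif_pos hk]
  · simp only [Equiv.coe_fn_mk, dif_neg (not_lt.mpr hk)]

variable {d : X → X → ℝ≥0∞} {x₀ : X}

lemma aux_matchCost_symm (hd : IsEPMetric d) {r : ℕ} (x y : Fin r → X) :
    matchCost d p x y = matchCost d p y x := by
  have key : ∀ (x y : Fin r → X) (σ : Equiv.Perm (Fin r)),
      lpNorm p (fun k => d (y k) (x (σ⁻¹ k))) = lpNorm p (fun k => d (x k) (y (σ k))) := by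
    intro x y σ
    have : (fun k => d (y k) (x (σ⁻¹ k)))
        = (fun k => d (x k) (y (σ k))) ∘ (σ⁻¹ : Equiv.Perm (Fin r)) := by
      funext k
      simp [Function.comp, hd.symm]
    rw [this, aux_lpNorm_comp_equiv]
  apply le_antisymm
  · exact le_iInf fun σ => iInf_le_of_le σ⁻¹ (le_of_eq (key y x σ))
  · exact le_iInf fun σ => iInf_le_of_le σ⁻¹ (le_of_eq (key x y σ))

lemma aux_matchCost_comp_right {r : ℕ} (x y : Fin r → X) (σ : Equiv.Perm (Fin r)) :
    matchCost d p x (y ∘ σ) = matchCost d p x y := by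
  apply le_antisymm
  · refine le_iInf fun τ => iInf_le_of_le (σ⁻¹ * τ) (le_of_eq ?_)
    have h : (fun k => d (x k) ((y ∘ σ) ((σ⁻¹ * τ) k))) = fun k => d (x k) (y (τ k)) := by
      funext k
      simp [Function.comp]
    rw [h]
  · refine le_iInf fun τ => iInf_le_of_le (σ * τ) (le_of_eq ?_)
    have h : (fun k => d (x k) (y ((σ * τ) k))) = fun k => d (x k) ((y ∘ σ) (τ k)) := by
      funext k
      simp [Function.comp]
    rw [h]

lemma aux_matchCost_comp_left {r : ℕ} (x y : Fin r → X) (σ : Equiv.Perm (Fin r)) :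
    matchCost d p (x ∘ σ) y = matchCost d p x y := by
  have key : ∀ τ : Equiv.Perm (Fin r),
      lpNorm p (fun k => d ((x ∘ σ) k) (y (τ k)))
        = lpNorm p (fun k => d (x k) (y ((τ * σ⁻¹) k))) := by
    intro τ
    have : (fun k => d ((x ∘ σ) k) (y (τ k)))
        = (fun k => d (x k) (y ((τ * σ⁻¹) k))) ∘ σ := by
      funext k
      simp [Function.comp]
    rw [this, aux_lpNorm_comp_equiv]
  apply le_antisymm
  · refine le_iInf fun τ => iInf_le_of_le (τ * σ) (le_of_eq ?_)
    rw [key (τ * σ)]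
    congr 1
    funext k
    simp
  · refine le_iInf fun τ => iInf_le_of_le (τ * σ⁻¹) (le_of_eq (key τ).symm)

lemma aux_matchCost_triangle (hd : IsEPMetric d) (hp : 1 ≤ p) {r : ℕ} (x y z : Fin r → X) :
    matchCost d p x z ≤ matchCost d p x y + matchCost d p y z := by
  simp only [matchCost]
  rw [ENNReal.iInf_add]
  refine le_iInf fun σ => ?_
  rw [ENNReal.add_iInf]
  refine le_iInf fun τ => ?_
  refine iInf_le_of_le (τ * σ) ?_
  calc lpNorm p (fun k => d (x k) (z ((τ * σ) k)))
      ≤ lpNorm p (fun k => d (x k) (y (σ k)) + d (y (σ k)) (z (τ (σ k)))) :=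
        aux_lpNorm_mono fun k => hd.triangle _ _ _
    _ ≤ lpNorm p (fun k => d (x k) (y (σ k))) + lpNorm p (fun k => d (y (σ k)) (z (τ (σ k)))) :=
        aux_lpNorm_add_le hp _ _
    _ = lpNorm p (fun k => d (x k) (y (σ k))) + lpNorm p (fun k => d (y k) (z (τ k))) := by
        congr 1
        have h : (fun k => d (y (σ k)) (z (τ (σ k)))) = (fun k => d (y k) (z (τ k))) ∘ σ := rfl
        rw [h, aux_lpNorm_comp_equiv]

lemma aux_padTo_mFun (x₀ : X) (s : Multiset X) (R : ℕ) :
    padTo x₀ (mFun s) R = fun k : Fin R => s.toList.getD (k : ℕ) x₀ := by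
  funext k
  unfold padTo mFun
  by_cases h : (k : ℕ) < s.toList.length
  · rw [dif_pos h, List.getD_eq_getElem _ _ h, List.get_eq_getElem]
  · rw [dif_neg h, List.getD_eq_default _ _ (le_of_not_gt h)]

lemma aux_get_pad_eq_getD (x₀ : X) (l : List X) (m : ℕ)
    (k : Fin ((l ++ List.replicate m x₀).length)) :
    (l ++ List.replicate m x₀).get k = l.getD (k : ℕ) x₀ := by
  rw [List.get_eq_getElem]
  by_cases h : (k : ℕ) < l.length
  · rw [List.getElem_append_left h, List.getD_eq_getElem _ _ h]
  · have hk := k.2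
    simp only [List.length_append, List.length_replicate] at hk
    rw [List.getElem_append_right (le_of_not_gt h), List.getElem_replicate,
      List.getD_eq_default _ _ (le_of_not_gt h)]

lemma aux_exists_perm_pad (x₀ : X) (s : Multiset X) (a R : ℕ)
    (h : Multiset.card s + a ≤ R) :
    ∃ σ : Equiv.Perm (Fin R), ∀ k : Fin R,
      (s + Multiset.replicate a x₀).toList.getD (k : ℕ) x₀
        = s.toList.getD ((σ k : Fin R) : ℕ) x₀ := by
  classical
  set s' := s + Multiset.replicate a x₀ with hs'
  have hlen' : s'.toList.length = Multiset.card s + a := by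
    simp [hs', Multiset.length_toList]
  have hlen : s.toList.length = Multiset.card s := Multiset.length_toList s
  set L₁ := s'.toList ++ List.replicate (R - (Multiset.card s + a)) x₀ with hL₁
  set L₂ := s.toList ++ List.replicate (R - Multiset.card s) x₀ with hL₂
  have hl1 : L₁.length = R := by simp [hL₁, hlen']; omega
  have hl2 : L₂.length = R := by simp [hL₂, hlen]; omega
  have hp : L₁.Perm L₂ := by
    have h1 : s'.toList.Perm (s.toList ++ List.replicate a x₀) := by
      rw [← Multiset.coe_eq_coe]
      simp [hs', Multiset.coe_toList, ← Multiset.coe_add, ← Multiset.coe_replicate]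
    have h2 : L₁.Perm ((s.toList ++ List.replicate a x₀)
        ++ List.replicate (R - (Multiset.card s + a)) x₀) := h1.append_right _
    refine h2.trans (List.Perm.of_eq ?_)
    rw [List.append_assoc, ← List.replicate_add]
    congr 2
    omega
  obtain ⟨σ₀, hσ₀⟩ := aux_exists_get_equiv_of_perm hp
  refine ⟨(finCongr hl1.symm).trans (σ₀.trans (finCongr hl2)), fun k => ?_⟩
  have e1 : s'.toList.getD (k : ℕ) x₀ = L₁.get (finCongr hl1.symm k) := by
    have h5 := aux_get_pad_eq_getD x₀ s'.toList (R - (Multiset.card s + a)) (finCongr hl1.symm k)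
    rw [h5]
    simp
  have e2 := hσ₀ (finCongr hl1.symm k)
  have e3 : L₂.get (σ₀ (finCongr hl1.symm k))
      = s.toList.getD ((σ₀ (finCongr hl1.symm k) : ℕ)) x₀ :=
    aux_get_pad_eq_getD x₀ s.toList (R - Multiset.card s) _
  rw [e1, e2, e3]
  rfl

lemma aux_matchCost_pad_mono (hd : IsEPMetric d) (hp : 1 ≤ p) (s t : Multiset X) {r R : ℕ}
    (hs : Multiset.card s ≤ r) (ht : Multiset.card t ≤ r) (hrR : r ≤ R) :
    matchCost d p (fun k : Fin R => s.toList.getD (k : ℕ) x₀)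
        (fun k : Fin R => t.toList.getD (k : ℕ) x₀)
      ≤ matchCost d p (fun k : Fin r => s.toList.getD (k : ℕ) x₀)
        (fun k : Fin r => t.toList.getD (k : ℕ) x₀) := by
  have hls : s.toList.length = Multiset.card s := Multiset.length_toList s
  have hlt' : t.toList.length = Multiset.card t := Multiset.length_toList t
  refine le_iInf fun σ => ?_
  obtain ⟨τ, hτ1, hτ2⟩ := aux_exists_extend_perm hrR σ
  refine iInf_le_of_le τ (le_of_eq ?_)
  refine aux_lpNorm_eq_of_padded hrR hp _ _ (fun k hk => ?_) (fun k hk => ?_)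
  · show d (s.toList.getD (k : ℕ) x₀) (t.toList.getD ((τ k : Fin R) : ℕ) x₀)
        = d (s.toList.getD (k : ℕ) x₀) (t.toList.getD ((σ ⟨k, hk⟩ : Fin r) : ℕ) x₀)
    rw [hτ1 k hk]
  · show d (s.toList.getD (k : ℕ) x₀) (t.toList.getD ((τ k : Fin R) : ℕ) x₀) = 0
    rw [hτ2 k hk]
    rw [List.getD_eq_default _ _ (show s.toList.length ≤ (k : ℕ) by omega),
      List.getD_eq_default _ _ (show t.toList.length ≤ (k : ℕ) by omega)]
    exact hd.refl x₀

lemma aux_WpM_eq (s t : Multiset X) :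
    WpM d x₀ p s t
      = matchCost d p
          (fun k : Fin (Multiset.card s + Multiset.card t) => s.toList.getD (k : ℕ) x₀)
          (fun k : Fin (Multiset.card s + Multiset.card t) => t.toList.getD (k : ℕ) x₀) := by
  rw [WpM, aux_padTo_mFun, aux_padTo_mFun]

lemma aux_Wp_le_matchCost (s u : Multiset X) {R : ℕ}
    (h : Multiset.card s + Multiset.card u ≤ R) :
    Wp d x₀ p ((diagCon x₀).mk' s) ((diagCon x₀).mk' u)
      ≤ matchCost d p (fun k : Fin R => s.toList.getD (k : ℕ) x₀)
          (fun k : Fin R => u.toList.getD (k : ℕ) x₀) := by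
  set j := R - (Multiset.card s + Multiset.card u) with hj
  set s' := s + Multiset.replicate j x₀ with hs'
  have hmk : (diagCon x₀).mk' s' = (diagCon x₀).mk' s := by
    refine (AddCon.eq _).mpr ?_
    exact ⟨0, j, by simp [hs']⟩
  have hcard : Multiset.card s' + Multiset.card u = R := by
    simp only [hs', Multiset.card_add, Multiset.card_replicate]
    omega
  have step1 : Wp d x₀ p ((diagCon x₀).mk' s) ((diagCon x₀).mk' u) ≤ WpM d x₀ p s' u := by
    rw [Wp]
    exact iInf_le_of_le s' (iInf_le_of_le u (iInf_le_of_le hmk (iInf_le _ rfl)))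
  refine step1.trans ?_
  rw [aux_WpM_eq, hcard]
  obtain ⟨σ, hσ⟩ := aux_exists_perm_pad x₀ s j R (by omega)
  have hfun : (fun k : Fin R => s'.toList.getD (k : ℕ) x₀)
      = (fun k : Fin R => s.toList.getD (k : ℕ) x₀) ∘ σ := funext hσ
  rw [hfun, aux_matchCost_comp_left]

lemma aux_Wp_triangle_core (hd : IsEPMetric d) (hp : 1 ≤ p) (s t t' u : Multiset X)
    (hrel : (diagCon x₀) t t') :
    Wp d x₀ p ((diagCon x₀).mk' s) ((diagCon x₀).mk' u)
      ≤ WpM d x₀ p s t + WpM d x₀ p t' u := by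
  obtain ⟨a, b, hab⟩ := hrel
  have hcardT : Multiset.card t + a = Multiset.card t' + b := by
    have := congrArg Multiset.card hab
    simpa using this
  set R := Multiset.card s + (Multiset.card t + a) + Multiset.card u with hR
  have step1 := aux_Wp_le_matchCost (d := d) (p := p) (x₀ := x₀) s u (R := R) (by omega)
  refine step1.trans ?_
  have step2 := aux_matchCost_triangle hd hp
    (fun k : Fin R => s.toList.getD (k : ℕ) x₀)
    (fun k : Fin R => (t + Multiset.replicate a x₀).toList.getD (k : ℕ) x₀)
    (fun k : Fin R => u.toList.getD (k : ℕ) x₀)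
  refine step2.trans (add_le_add ?_ ?_)
  · obtain ⟨σ, hσ⟩ := aux_exists_perm_pad x₀ t a R (by omega)
    have hfun : (fun k : Fin R => (t + Multiset.replicate a x₀).toList.getD (k : ℕ) x₀)
        = (fun k : Fin R => t.toList.getD (k : ℕ) x₀) ∘ σ := funext hσ
    rw [hfun, aux_matchCost_comp_right]
    refine le_trans (aux_matchCost_pad_mono hd hp s t (r := Multiset.card s + Multiset.card t)
      (by omega) (by omega) (by omega)) ?_
    rw [← aux_WpM_eq]
  · rw [hab]
    obtain ⟨σ, hσ⟩ := aux_exists_perm_pad x₀ t' b R (by omega)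
    have hfun : (fun k : Fin R => (t' + Multiset.replicate b x₀).toList.getD (k : ℕ) x₀)
        = (fun k : Fin R => t'.toList.getD (k : ℕ) x₀) ∘ σ := funext hσ
    rw [hfun, aux_matchCost_comp_left]
    refine le_trans (aux_matchCost_pad_mono hd hp t' u (r := Multiset.card t' + Multiset.card u)
      (by omega) (by omega) (by omega)) ?_
    rw [← aux_WpM_eq]

lemma aux_WpM_symm (hd : IsEPMetric d) (s t : Multiset X) :
    WpM d x₀ p s t = WpM d x₀ p t s := by
  rw [aux_WpM_eq, aux_WpM_eq, aux_matchCost_symm hd]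
  exact congrArg (fun m => matchCost d p
      (fun k : Fin m => t.toList.getD (k : ℕ) x₀)
      (fun k : Fin m => s.toList.getD (k : ℕ) x₀)) (Nat.add_comm _ _)

end Aux

/-- The p-Wasserstein distance is an extended pseudometric on the monoid of
persistence diagrams. -/
theorem wasserstein_is_epmetric (d : X → X → ℝ≥0∞) (hd : IsEPMetric d) (x₀ : X)
    (p : ℝ≥0∞) (hp : 1 ≤ p) :
    IsEPMetric (Wp d x₀ p) := by
  constructor
  · -- reflexivity
    intro α
    obtain ⟨s, rfl⟩ := AddCon.mk'_surjective (c := diagCon x₀) α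
    refine le_antisymm ?_ (zero_le)
    have h1 : Wp d x₀ p ((diagCon x₀).mk' s) ((diagCon x₀).mk' s) ≤ WpM d x₀ p s s := by
      rw [Wp]
      exact iInf_le_of_le s (iInf_le_of_le s (iInf_le_of_le rfl (iInf_le _ rfl)))
    refine h1.trans ?_
    rw [WpM, matchCost]
    refine iInf_le_of_le (1 : Equiv.Perm (Fin (Multiset.card s + Multiset.card s)))
      (le_of_eq ?_)
    have h2 : (fun k : Fin (Multiset.card s + Multiset.card s) =>
        d (padTo x₀ (mFun s) (Multiset.card s + Multiset.card s) k)
          (padTo x₀ (mFun s) (Multiset.card s + Multiset.card s)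
            ((1 : Equiv.Perm (Fin (Multiset.card s + Multiset.card s))) k)))
        = fun _ => 0 := by
      funext k
      exact hd.refl _
    rw [h2, aux_lpNorm_zero hp]
  · -- symmetry
    have key : ∀ α β, Wp d x₀ p α β ≤ Wp d x₀ p β α := by
      intro α β
      conv_rhs => rw [Wp]
      refine le_iInf fun t => le_iInf fun s => le_iInf fun h2 => le_iInf fun h1 => ?_
      rw [Wp]
      exact iInf_le_of_le s (iInf_le_of_le t (iInf_le_of_le h1
        (iInf_le_of_le h2 (le_of_eq (aux_WpM_symm (p := p) (x₀ := x₀) hd s t)))))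
    exact fun α β => le_antisymm (key α β) (key β α)
  · -- triangle inequality
    intro α β γ
    have h5 : Wp d x₀ p α β + Wp d x₀ p β γ
        = ⨅ (s : Multiset X) (t : Multiset X) (_ : (diagCon x₀).mk' s = α)
            (_ : (diagCon x₀).mk' t = β), (WpM d x₀ p s t + Wp d x₀ p β γ) := by
      conv_lhs => rw [Wp]
      simp only [ENNReal.iInf_add]
    rw [h5]
    refine le_iInf fun s => le_iInf fun t => le_iInf fun h1 => le_iInf fun h2 => ?_
    have h6 : WpM d x₀ p s t + Wp d x₀ p β γ
        = ⨅ (t' : Multiset X) (u : Multiset X) (_ : (diagCon x₀).mk' t' = β)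
            (_ : (diagCon x₀).mk' u = γ), (WpM d x₀ p s t + WpM d x₀ p t' u) := by
      conv_lhs => rw [Wp]
      simp only [ENNReal.add_iInf]
    rw [h6]
    refine le_iInf fun t' => le_iInf fun u => le_iInf fun h3 => le_iInf fun h4 => ?_
    have hrel : (diagCon x₀) t t' := (AddCon.eq _).mp (h2.trans h3.symm)
    rw [← h1, ← h4]
    exact aux_Wp_triangle_core hd hp s t t' u hrel

end
end

section
/- Let (X, d, x₀) be a pointed extended pseudometric space and p ∈ [1, ∞]. Then W_p[d, x₀] on D(X, x₀) satisfies the separation axiom (W_p(α, β) = 0 implies α = β) if and only if d satisfies the separation axiom, and W_p is finite-valued if and only if d is finite-valued. -/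
open scoped ENNReal BigOperators
noncomputable section

variable {X : Type*}

section Helpers

lemma ENNReal.rpow_toReal_cancel {p : ℝ≥0∞} (hp : 1 ≤ p) (hptop : p ≠ ∞) (x : ℝ≥0∞) :
    (x ^ p.toReal) ^ (1 / p.toReal) = x := by
  have ht : 0 < p.toReal := ENNReal.toReal_pos (zero_lt_one.trans_le hp).ne' hptop
  rw [← ENNReal.rpow_mul, mul_one_div_cancel ht.ne', ENNReal.rpow_one]

lemma le_lpNorm {p : ℝ≥0∞} (hp : 1 ≤ p) {n : ℕ} (v : Fin n → ℝ≥0∞) (i : Fin n) :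
    v i ≤ lpNorm p v := by
  unfold lpNorm
  split_ifs with h
  · exact le_iSup v i
  · calc v i = (v i ^ p.toReal) ^ (1 / p.toReal) := (ENNReal.rpow_toReal_cancel hp h _).symm
      _ ≤ _ := ENNReal.rpow_le_rpow
          (Finset.single_le_sum (f := fun j => v j ^ p.toReal) (fun j _ => zero_le)
            (Finset.mem_univ i)) (by positivity)

lemma lpNorm_lt_top {p : ℝ≥0∞} {n : ℕ} {v : Fin n → ℝ≥0∞}
    (h : ∀ i, v i ≠ ∞) : lpNorm p v < ∞ := by
  unfold lpNorm
  split_ifs with hpt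
  · calc (⨆ i, v i) ≤ ∑ i, v i :=
        iSup_le fun i => Finset.single_le_sum (fun j _ => zero_le) (Finset.mem_univ i)
      _ < ∞ := ENNReal.sum_lt_top.2 fun i _ => (h i).lt_top
  · refine ENNReal.rpow_lt_top_of_nonneg (by positivity) ?_
    exact (ENNReal.sum_lt_top.2 fun i _ =>
      ENNReal.rpow_lt_top_of_nonneg ENNReal.toReal_nonneg (h i)).ne

lemma lpNorm_le_single {p : ℝ≥0∞} (hp : 1 ≤ p) {n : ℕ} {v : Fin n → ℝ≥0∞} {i₀ : Fin n}
    (h : ∀ i, i ≠ i₀ → v i = 0) {c : ℝ≥0∞} (hc : v i₀ ≤ c) : lpNorm p v ≤ c := by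
  unfold lpNorm
  split_ifs with hpt
  · refine iSup_le fun i => ?_
    by_cases hi : i = i₀
    · exact hi ▸ hc
    · rw [h i hi]; exact zero_le
  · have ht : 0 < p.toReal := ENNReal.toReal_pos (zero_lt_one.trans_le hp).ne' hpt
    have hsum : ∑ i, v i ^ p.toReal = v i₀ ^ p.toReal := by
      refine Finset.sum_eq_single i₀ (fun j _ hj => ?_) (by simp)
      rw [h j hj, ENNReal.zero_rpow_of_pos ht]
    rw [hsum, ENNReal.rpow_toReal_cancel hp hpt]
    exact hc

lemma diagCon_mk_eq {x₀ : X} {s t : Multiset X} :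
    (diagCon x₀).mk' s = (diagCon x₀).mk' t ↔
      ∃ a b : ℕ, s + Multiset.replicate a x₀ = t + Multiset.replicate b x₀ :=
  AddCon.eq _

lemma diagι_inj {x₀ x y : X} (h : diagι x₀ x = diagι x₀ y) : x = y := by
  obtain ⟨a, b, hab⟩ := diagCon_mk_eq.1 h
  have hcard := congrArg Multiset.card hab
  simp only [Multiset.card_add, Multiset.card_singleton, Multiset.card_replicate,
    add_right_inj] at hcard
  subst hcard
  have := add_right_cancel hab
  exact Multiset.singleton_inj.1 this

lemma mFun_mem {s : Multiset X} (k : Fin s.toList.length) : mFun s k ∈ s := by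
  have : mFun s k ∈ s.toList := List.get_mem s.toList k
  rwa [← Multiset.mem_coe, Multiset.coe_toList] at this

lemma padTo_mem {x₀ : X} (s : Multiset X) {r : ℕ} (k : Fin r) :
    padTo x₀ (mFun s) r k ∈ s ∨ padTo x₀ (mFun s) r k = x₀ := by
  unfold padTo
  split_ifs with h
  · exact Or.inl (mFun_mem _)
  · exact Or.inr rfl

lemma exists_padTo_eq {x₀ : X} {s : Multiset X} {r : ℕ} (hr : s.toList.length ≤ r) {u : X}
    (hu : u ∈ s) : ∃ k : Fin r, padTo x₀ (mFun s) r k = u := by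
  rw [← Multiset.coe_toList s, Multiset.mem_coe] at hu
  obtain ⟨i, hi⟩ := List.get_of_mem hu
  refine ⟨⟨(i : ℕ), lt_of_lt_of_le i.isLt hr⟩, ?_⟩
  have h : ((i : ℕ)) < s.toList.length := i.isLt
  simp only [padTo, h, dif_pos, mFun]
  rw [← hi]

lemma ofFn_padTo (x₀ : X) (s : Multiset X) {r : ℕ} (h : s.toList.length ≤ r) :
    (↑(List.ofFn (padTo x₀ (mFun s) r)) : Multiset X)
      = s + Multiset.replicate (r - s.toList.length) x₀ := by
  obtain ⟨m, rfl⟩ : ∃ m, r = s.toList.length + m :=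
    ⟨r - s.toList.length, (Nat.add_sub_cancel' h).symm⟩
  rw [List.ofFn_add]
  have h1 : (List.ofFn fun i : Fin s.toList.length =>
      padTo x₀ (mFun s) _ (Fin.castAdd m i)) = s.toList := by
    conv_rhs => rw [← List.ofFn_get s.toList]
    congr 1; funext i
    have hlt : ((Fin.castAdd m i : Fin (s.toList.length + m)) : ℕ) < s.toList.length := i.isLt
    simp only [padTo]
    rw [dif_pos hlt]
    exact congrArg s.toList.get (Fin.ext rfl)
  have h2 : (List.ofFn fun j : Fin m =>
      padTo x₀ (mFun s) _ (Fin.natAdd s.toList.length j)) = List.replicate m x₀ := by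
    rw [← List.ofFn_const]
    congr 1; funext j
    have hlt : ¬ ((Fin.natAdd s.toList.length j : Fin _) : ℕ) < s.toList.length := by simp
    simp only [padTo]
    rw [dif_neg hlt]
  erw [h1, h2, Nat.add_sub_cancel_left]
  rw [← Multiset.coe_add, Multiset.coe_toList, Multiset.coe_replicate]

lemma exists_matching_of_lt {d : X → X → ℝ≥0∞} {x₀ : X} {p : ℝ≥0∞} {α β : Diagram X x₀}
    {c : ℝ≥0∞} (h : Wp d x₀ p α β < c) :
    ∃ (s t : Multiset X) (_ : (diagCon x₀).mk' s = α) (_ : (diagCon x₀).mk' t = β)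
      (σ : Equiv.Perm (Fin (Multiset.card s + Multiset.card t))),
      lpNorm p (fun k => d (padTo x₀ (mFun s) (Multiset.card s + Multiset.card t) k)
        (padTo x₀ (mFun t) (Multiset.card s + Multiset.card t) (σ k))) < c := by
  simp only [Wp, iInf_lt_iff] at h
  obtain ⟨s, t, hs, ht, hW⟩ := h
  simp only [WpM, matchCost, iInf_lt_iff] at hW
  obtain ⟨σ, hσ⟩ := hW
  exact ⟨s, t, hs, ht, σ, hσ⟩

lemma Wp_le_WpM {d : X → X → ℝ≥0∞} {x₀ : X} {p : ℝ≥0∞} {s t : Multiset X}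
    {α β : Diagram X x₀} (hs : (diagCon x₀).mk' s = α) (ht : (diagCon x₀).mk' t = β) :
    Wp d x₀ p α β ≤ WpM d x₀ p s t :=
  le_trans (iInf_le _ s) <| le_trans (iInf_le _ t) <|
    le_trans (iInf_le _ hs) (iInf_le _ ht)

end Helpers

/-- `W_p` satisfies separation iff `d` does, and `W_p` is finite iff `d` is finite. -/
theorem wasserstein_separation_finiteness (d : X → X → ℝ≥0∞) (hd : IsEPMetric d)
    (x₀ : X) (p : ℝ≥0∞) (hp : 1 ≤ p) :
    ((∀ α β : Diagram X x₀, Wp d x₀ p α β = 0 → α = β) ↔ (∀ x y : X, d x y = 0 → x = y)) ∧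
    ((∀ α β : Diagram X x₀, Wp d x₀ p α β ≠ ∞) ↔ (∀ x y : X, d x y ≠ ∞)) := by
  classical
  -- upper bound : Wp (ι x) (ι y) ≤ d x y
  have key_le : ∀ x y : X, Wp d x₀ p (diagι x₀ x) (diagι x₀ y) ≤ d x y := by
    intro x y
    refine (Wp_le_WpM rfl rfl).trans ?_
    unfold WpM matchCost
    refine (iInf_le _ (Equiv.refl _)).trans ?_
    have hpos : 0 < Multiset.card ({x} : Multiset X) + Multiset.card ({y} : Multiset X) := by
      simp
    refine lpNorm_le_single hp (i₀ := ⟨0, hpos⟩) ?_ ?_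
    · intro i hi
      have hi0 : ¬ ((i : ℕ) < 1) := by
        intro hc
        exact hi (Fin.ext (show (i : ℕ) = 0 by omega))
      have h1 : padTo x₀ (mFun ({x} : Multiset X)) _ i = x₀ := by
        simp only [padTo]
        rw [dif_neg (by simp only [Multiset.length_toList, Multiset.card_singleton]; omega)]
      have h2 : padTo x₀ (mFun ({y} : Multiset X)) _ ((Equiv.refl _) i) = x₀ := by
        rw [Equiv.refl_apply]; simp only [padTo]
        rw [dif_neg (by simp only [Multiset.length_toList, Multiset.card_singleton]; omega)]
      simp only [h1, h2]
      exact hd.refl x₀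
    · have hlt1 : (0 : ℕ) < ({x} : Multiset X).toList.length := by
        simp [Multiset.length_toList]
      have hlt2 : (0 : ℕ) < ({y} : Multiset X).toList.length := by
        simp [Multiset.length_toList]
      have h1 : padTo x₀ (mFun ({x} : Multiset X)) _ (⟨0, hpos⟩ : Fin _) = x := by
        simp only [padTo]
        rw [dif_pos hlt1]
        have := mFun_mem (s := ({x} : Multiset X)) ⟨0, hlt1⟩
        rwa [Multiset.mem_singleton] at this
      have h2 : padTo x₀ (mFun ({y} : Multiset X)) _ ((Equiv.refl _) (⟨0, hpos⟩ : Fin _)) = y := by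
        rw [Equiv.refl_apply]; simp only [padTo]
        rw [dif_pos hlt2]
        have := mFun_mem (s := ({y} : Multiset X)) ⟨0, hlt2⟩
        rwa [Multiset.mem_singleton] at this
      rw [h1, h2]
  refine ⟨⟨?_, ?_⟩, ?_, ?_⟩
  · -- Wp separated → d separated
    intro hW x y hxy
    refine diagι_inj (hW _ _ (le_antisymm ?_ zero_le))
    rw [← hxy]; exact key_le x y
  · -- d separated → Wp separated
    intro hsep α β hW
    obtain ⟨s₁, hs₁⟩ := AddCon.mk'_surjective α
    obtain ⟨t₁, ht₁⟩ := AddCon.mk'_surjective β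
    set S : Finset X := insert x₀ (s₁ + t₁).toFinset with hS
    set ε : ℝ≥0∞ := (S ×ˢ S).inf (fun q => if d q.1 q.2 = 0 then ⊤ else d q.1 q.2) with hε
    have hε0 : 0 < ε := by
      rw [hε, Finset.lt_inf_iff (by exact ENNReal.zero_lt_top)]
      intro q _
      split_ifs with h
      · exact ENNReal.zero_lt_top
      · exact pos_iff_ne_zero.2 h
    have hx₀S : x₀ ∈ S := Finset.mem_insert_self _ _
    have hmemS : ∀ {s : Multiset X}, (diagCon x₀).mk' s = α ∨ (diagCon x₀).mk' s = β →
        ∀ u ∈ s, u ∈ S := by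
      rintro s hsor u hu
      have hrel : ∃ (w : Multiset X) (_ : w ≤ s₁ + t₁) (a b : ℕ),
          s + Multiset.replicate a x₀ = w + Multiset.replicate b x₀ := by
        rcases hsor with hsa | hsb
        · obtain ⟨a, b, hab⟩ := diagCon_mk_eq.1 (hsa.trans hs₁.symm)
          exact ⟨s₁, Multiset.le_add_right _ _, a, b, hab⟩
        · obtain ⟨a, b, hab⟩ := diagCon_mk_eq.1 (hsb.trans ht₁.symm)
          exact ⟨t₁, Multiset.le_add_left _ _, a, b, hab⟩
      obtain ⟨w, hw, a, b, hab⟩ := hrel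
      have hu' : u ∈ w + Multiset.replicate b x₀ := by
        rw [← hab]; exact Multiset.mem_add.2 (Or.inl hu)
      rcases Multiset.mem_add.1 hu' with h | h
      · exact Finset.mem_insert.2 (Or.inr (Multiset.mem_toFinset.2 (Multiset.mem_of_le hw h)))
      · exact Finset.mem_insert.2 (Or.inl (Multiset.eq_of_mem_replicate h))
    have hlt : Wp d x₀ p α β < ε := by rw [hW]; exact hε0
    obtain ⟨s, t, hs, ht, σ, hσ⟩ := exists_matching_of_lt hlt
    have heq : ∀ k : Fin (Multiset.card s + Multiset.card t),
        padTo x₀ (mFun s) (Multiset.card s + Multiset.card t) k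
          = padTo x₀ (mFun t) (Multiset.card s + Multiset.card t) (σ k) := by
      intro k
      have hdk : d (padTo x₀ (mFun s) (Multiset.card s + Multiset.card t) k)
          (padTo x₀ (mFun t) (Multiset.card s + Multiset.card t) (σ k)) < ε :=
        (le_lpNorm hp _ k).trans_lt hσ
      have huS : padTo x₀ (mFun s) (Multiset.card s + Multiset.card t) k ∈ S := by
        rcases padTo_mem (x₀ := x₀) s k with h | h
        · exact hmemS (Or.inl hs) _ h
        · rw [h]; exact hx₀S
      have hvS : padTo x₀ (mFun t) (Multiset.card s + Multiset.card t) (σ k) ∈ S := by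
        rcases padTo_mem (x₀ := x₀) t (σ k) with h | h
        · exact hmemS (Or.inr ht) _ h
        · rw [h]; exact hx₀S
      refine hsep _ _ ?_
      by_contra hne
      have hle : ε ≤ d (padTo x₀ (mFun s) (Multiset.card s + Multiset.card t) k)
          (padTo x₀ (mFun t) (Multiset.card s + Multiset.card t) (σ k)) := by
        have h2 := Finset.inf_le (s := S ×ˢ S)
          (f := fun q : X × X => if d q.1 q.2 = 0 then ⊤ else d q.1 q.2)
          (b := (padTo x₀ (mFun s) (Multiset.card s + Multiset.card t) k,
                 padTo x₀ (mFun t) (Multiset.card s + Multiset.card t) (σ k)))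
          (Finset.mem_product.2 ⟨huS, hvS⟩)
        rw [hε]
        simpa [hne] using h2
      exact absurd (hle.trans_lt hdk) (lt_irrefl _)
    have hmul : (↑(List.ofFn (padTo x₀ (mFun s) (Multiset.card s + Multiset.card t))) : Multiset X)
        = ↑(List.ofFn (padTo x₀ (mFun t) (Multiset.card s + Multiset.card t))) := by
      rw [← Fin.univ_val_map, ← Fin.univ_val_map]
      calc Finset.univ.val.map (padTo x₀ (mFun s) (Multiset.card s + Multiset.card t))
          = Finset.univ.val.map
              ((padTo x₀ (mFun t) (Multiset.card s + Multiset.card t)) ∘ σ) :=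
            Multiset.map_congr rfl (fun k _ => heq k)
        _ = (Finset.univ.val.map σ).map
              (padTo x₀ (mFun t) (Multiset.card s + Multiset.card t)) := by
            rw [Multiset.map_map]
        _ = Finset.univ.val.map (padTo x₀ (mFun t) (Multiset.card s + Multiset.card t)) := by
            rw [Multiset.map_univ_val_equiv]
    rw [ofFn_padTo x₀ s (by rw [Multiset.length_toList]; omega),
        ofFn_padTo x₀ t (by rw [Multiset.length_toList]; omega)] at hmul
    rw [← hs, ← ht]
    exact diagCon_mk_eq.2 ⟨_, _, hmul⟩
  · -- Wp finite → d finite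
    intro hW x y
    have h' : Wp d x₀ p (diagι x₀ x) (diagι x₀ y) < ⊤ :=
      lt_top_iff_ne_top.2 (hW (diagι x₀ x) (diagι x₀ y))
    obtain ⟨s, t, hs, ht, σ, hσ⟩ := exists_matching_of_lt h'
    have hfin : ∀ k : Fin (Multiset.card s + Multiset.card t),
        d (padTo x₀ (mFun s) (Multiset.card s + Multiset.card t) k)
          (padTo x₀ (mFun t) (Multiset.card s + Multiset.card t) (σ k)) ≠ ∞ :=
      fun k => ((le_lpNorm hp _ k).trans_lt hσ).ne
    have hs' : ∀ u ∈ s, u = x ∨ u = x₀ := by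
      intro u hu
      obtain ⟨a, b, hab⟩ := diagCon_mk_eq.1 hs
      have hu' : u ∈ ({x} : Multiset X) + Multiset.replicate b x₀ := by
        rw [← hab]; exact Multiset.mem_add.2 (Or.inl hu)
      rcases Multiset.mem_add.1 hu' with h | h
      · exact Or.inl (Multiset.mem_singleton.1 h)
      · exact Or.inr (Multiset.eq_of_mem_replicate h)
    have ht' : ∀ u ∈ t, u = y ∨ u = x₀ := by
      intro u hu
      obtain ⟨a, b, hab⟩ := diagCon_mk_eq.1 ht
      have hu' : u ∈ ({y} : Multiset X) + Multiset.replicate b x₀ := by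
        rw [← hab]; exact Multiset.mem_add.2 (Or.inl hu)
      rcases Multiset.mem_add.1 hu' with h | h
      · exact Or.inl (Multiset.mem_singleton.1 h)
      · exact Or.inr (Multiset.eq_of_mem_replicate h)
    have hxs : x ∈ s ∨ x = x₀ := by
      obtain ⟨a, b, hab⟩ := diagCon_mk_eq.1 hs
      have hx' : x ∈ s + Multiset.replicate a x₀ := by
        rw [hab]; exact Multiset.mem_add.2 (Or.inl (Multiset.mem_singleton_self x))
      rcases Multiset.mem_add.1 hx' with h | h
      · exact Or.inl h
      · exact Or.inr (Multiset.eq_of_mem_replicate h)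
    have hyt : y ∈ t ∨ y = x₀ := by
      obtain ⟨a, b, hab⟩ := diagCon_mk_eq.1 ht
      have hy' : y ∈ t + Multiset.replicate a x₀ := by
        rw [hab]; exact Multiset.mem_add.2 (Or.inl (Multiset.mem_singleton_self y))
      rcases Multiset.mem_add.1 hy' with h | h
      · exact Or.inl h
      · exact Or.inr (Multiset.eq_of_mem_replicate h)
    have hXval : ∀ k : Fin (Multiset.card s + Multiset.card t),
        padTo x₀ (mFun s) (Multiset.card s + Multiset.card t) k = x ∨
        padTo x₀ (mFun s) (Multiset.card s + Multiset.card t) k = x₀ :=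
      fun k => (padTo_mem s k).elim (hs' _) Or.inr
    have hYval : ∀ k : Fin (Multiset.card s + Multiset.card t),
        padTo x₀ (mFun t) (Multiset.card s + Multiset.card t) k = y ∨
        padTo x₀ (mFun t) (Multiset.card s + Multiset.card t) k = x₀ :=
      fun k => (padTo_mem t k).elim (ht' _) Or.inr
    have hcs : s.toList.length ≤ Multiset.card s + Multiset.card t := by
      rw [Multiset.length_toList]; omega
    have hct : t.toList.length ≤ Multiset.card s + Multiset.card t := by
      rw [Multiset.length_toList]; omega
    have hx' : d x y ≠ ∞ ∨ d x x₀ ≠ ∞ := by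
      rcases hxs with hx | hx
      · obtain ⟨k, hk⟩ := exists_padTo_eq hcs hx
        have hfk := hfin k
        rw [hk] at hfk
        rcases hYval (σ k) with h | h
        · rw [h] at hfk; exact Or.inl hfk
        · rw [h] at hfk; exact Or.inr hfk
      · rw [hx]
        exact Or.inr (by rw [hd.refl]; exact ENNReal.zero_ne_top)
    have hy' : d x y ≠ ∞ ∨ d x₀ y ≠ ∞ := by
      rcases hyt with hy | hy
      · obtain ⟨j, hj⟩ := exists_padTo_eq hct hy
        have hfk := hfin (σ.symm j)
        rw [Equiv.apply_symm_apply, hj] at hfk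
        rcases hXval (σ.symm j) with h | h
        · rw [h] at hfk; exact Or.inl hfk
        · rw [h] at hfk; exact Or.inr hfk
      · rw [hy]
        exact Or.inr (by rw [hd.refl]; exact ENNReal.zero_ne_top)
    rcases hx' with h | hx'
    · exact h
    rcases hy' with h | hy'
    · exact h
    exact ne_top_of_le_ne_top (ENNReal.add_ne_top.2 ⟨hx', hy'⟩) (hd.triangle x x₀ y)
  · -- d finite → Wp finite
    intro hfin α β
    obtain ⟨s, hs⟩ := AddCon.mk'_surjective α
    obtain ⟨t, ht⟩ := AddCon.mk'_surjective β
    have h1 : Wp d x₀ p α β ≤ WpM d x₀ p s t := Wp_le_WpM hs ht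
    have h2 : WpM d x₀ p s t < ∞ := by
      unfold WpM matchCost
      refine (iInf_le _ (Equiv.refl _)).trans_lt ?_
      exact lpNorm_lt_top (fun k => hfin _ _)
    exact (h1.trans_lt h2).ne

end
end

section
/- For every pointed extended pseudometric space (X, d, x₀) and p ∈ [1, ∞], the canonical map i : X → D(X, x₀) is 1-Lipschitz with respect to d and W_p[d, x₀]; explicitly, W_p(i(x), i(x')) = min(d(x, x'), ‖(d(x, x₀), d(x', x₀))‖_p) ≤ d(x, x'). -/
open scoped ENNReal BigOperators
noncomputable section

variable {X : Type*}

section Helpers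
variable {p : ℝ≥0∞}

lemma toReal_pos_of_one_le (hp : 1 ≤ p) (hp' : p ≠ ∞) : 0 < p.toReal :=
  ENNReal.toReal_pos (by rintro rfl; exact absurd hp (by norm_num)) hp'

lemma lpNorm_coord (hp : 1 ≤ p) {n : ℕ} (v : Fin n → ℝ≥0∞) (i : Fin n) :
    v i ≤ lpNorm p v := by
  unfold lpNorm
  split_ifs with h
  · exact le_iSup v i
  · have hq := toReal_pos_of_one_le hp h
    calc v i = (v i ^ p.toReal) ^ (1 / p.toReal) := by
          rw [← ENNReal.rpow_mul, mul_one_div_cancel hq.ne', ENNReal.rpow_one]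
      _ ≤ _ := ENNReal.rpow_le_rpow
            (Finset.single_le_sum (f := fun k => v k ^ p.toReal)
              (fun _ _ => zero_le) (Finset.mem_univ i)) (by positivity)

lemma lpNorm_pair_le (hp : 1 ≤ p) {n : ℕ} (v : Fin n → ℝ≥0∞) {i j : Fin n}
    (hij : i ≠ j) {a b : ℝ≥0∞} (ha : v i = a) (hb : v j = b) :
    lpNorm p ![a, b] ≤ lpNorm p v := by
  unfold lpNorm
  split_ifs with h
  · refine iSup_le fun k => ?_
    fin_cases k
    · simpa [← ha] using le_iSup v i
    · simpa [← hb] using le_iSup v j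
  · apply ENNReal.rpow_le_rpow _ (by positivity)
    rw [Fin.sum_univ_two]
    simp only [Matrix.cons_val_zero, Matrix.cons_val_one, Matrix.head_cons]
    calc a ^ p.toReal + b ^ p.toReal
        = ∑ k ∈ ({i, j} : Finset (Fin n)), v k ^ p.toReal := by
          rw [Finset.sum_pair hij, ha, hb]
      _ ≤ _ := Finset.sum_le_sum_of_subset (Finset.subset_univ _)

lemma lpNorm_pair_zero (hp : 1 ≤ p) (a : ℝ≥0∞) : lpNorm p ![a, 0] = a := by
  unfold lpNorm
  split_ifs with h
  · apply le_antisymm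
    · refine iSup_le fun k => ?_
      fin_cases k <;> simp
    · simpa using le_iSup (![a, 0]) 0
  · have hq := toReal_pos_of_one_le hp h
    rw [Fin.sum_univ_two]
    simp only [Matrix.cons_val_zero, Matrix.cons_val_one, Matrix.head_cons]
    rw [ENNReal.zero_rpow_of_pos hq, add_zero, ← ENNReal.rpow_mul,
      mul_one_div_cancel hq.ne', ENNReal.rpow_one]

lemma lpNorm_pair_ind (hp : 1 ≤ p) {r : ℕ} {i j : Fin r} (hij : i ≠ j) (a b : ℝ≥0∞) :
    lpNorm p (fun k => if k = i then a else if k = j then b else 0) ≤ lpNorm p ![a, b] := by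
  unfold lpNorm
  split_ifs with h
  · refine iSup_le fun k => ?_
    simp only []
    split_ifs with h1 h2
    · exact le_iSup_of_le 0 (by simp)
    · exact le_iSup_of_le 1 (by simp)
    · exact zero_le
  · apply ENNReal.rpow_le_rpow _ (by positivity)
    have hq := toReal_pos_of_one_le hp h
    rw [Fin.sum_univ_two]
    simp only [Matrix.cons_val_zero, Matrix.cons_val_one, Matrix.head_cons]
    have key : ∀ k : Fin r, (if k = i then a else if k = j then b else 0) ^ p.toReal
        = (if k = i then a ^ p.toReal else 0) + (if k = j then b ^ p.toReal else 0) := by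
      intro k
      split_ifs with h1 h2 <;> simp_all [ENNReal.zero_rpow_of_pos hq]
    rw [Finset.sum_congr rfl fun k _ => key k]
    simp [Finset.sum_add_distrib, Finset.sum_ite_eq']

variable {x₀ : X}

lemma rep_mem {x : X} {s : Multiset X} (h : diagCon x₀ s {x}) :
    ∀ y ∈ s, y = x ∨ y = x₀ := by
  obtain ⟨a, b, hab⟩ := h
  intro y hy
  have hy2 : y ∈ s + Multiset.replicate a x₀ := Multiset.mem_add.2 (Or.inl hy)
  rw [hab] at hy2
  rcases Multiset.mem_add.1 hy2 with h1 | h1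
  · exact Or.inl (Multiset.mem_singleton.1 h1)
  · exact Or.inr (Multiset.eq_of_mem_replicate h1)

lemma rep_self_mem {x : X} {s : Multiset X} (h : diagCon x₀ s {x}) (hx : x ≠ x₀) :
    x ∈ s := by
  obtain ⟨a, b, hab⟩ := h
  have hx2 : x ∈ s + Multiset.replicate a x₀ := by
    rw [hab]; exact Multiset.mem_add.2 (Or.inl (Multiset.mem_singleton_self x))
  rcases Multiset.mem_add.1 hx2 with h1 | h1
  · exact h1
  · exact absurd (Multiset.eq_of_mem_replicate h1) hx

lemma padTo_spec (s : Multiset X) (r : ℕ) (k : Fin r) :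
    padTo x₀ (mFun s) r k ∈ s ∨ padTo x₀ (mFun s) r k = x₀ := by
  unfold padTo mFun
  split_ifs with h
  · exact Or.inl (Multiset.mem_toList.1 (List.get_mem _ _))
  · exact Or.inr rfl

lemma padTo_exists {y : X} {s : Multiset X} (hy : y ∈ s) {r : ℕ}
    (hr : Multiset.card s ≤ r) : ∃ k : Fin r, padTo x₀ (mFun s) r k = y := by
  have hy' : y ∈ s.toList := Multiset.mem_toList.2 hy
  obtain ⟨i, hi⟩ := List.mem_iff_get.1 hy'
  have hlt : (i : ℕ) < r :=
    lt_of_lt_of_le (by simpa [Multiset.length_toList] using i.2) hr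
  refine ⟨⟨i, hlt⟩, ?_⟩
  show (if h : ((i : ℕ)) < s.toList.length then mFun s ⟨i, h⟩ else x₀) = y
  rw [dif_pos i.2]
  exact hi

lemma key_lower {d : X → X → ℝ≥0∞} (hd : IsEPMetric d) {p : ℝ≥0∞}
    (hp : 1 ≤ p) (x x' : X) {r : ℕ} (xs ys : Fin r → X)
    (hxs : ∀ k, xs k = x ∨ xs k = x₀) (hys : ∀ k, ys k = x' ∨ ys k = x₀)
    (hxm : x ≠ x₀ → ∃ i, xs i = x) (hym : x' ≠ x₀ → ∃ j, ys j = x')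
    (σ : Equiv.Perm (Fin r)) :
    min (d x x') (lpNorm p ![d x x₀, d x' x₀])
      ≤ lpNorm p (fun k => d (xs k) (ys (σ k))) := by
  by_cases hx : x = x₀
  · by_cases hx' : x' = x₀
    · refine le_trans (min_le_left _ _) ?_
      rw [hx, hx', hd.refl]
      exact zero_le
    · obtain ⟨j, hj⟩ := hym hx'
      refine le_trans (min_le_left _ _) ?_
      have hc := lpNorm_coord hp (fun k => d (xs k) (ys (σ k))) (σ.symm j)
      have hxk : xs (σ.symm j) = x₀ := by
        rcases hxs (σ.symm j) with h | h
        · rw [h, hx]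
        · exact h
      rw [hx]
      simpa [hxk, hj] using hc
  · obtain ⟨i₀, hi₀⟩ := hxm hx
    by_cases hx' : x' = x₀
    · refine le_trans (min_le_left _ _) ?_
      have hc := lpNorm_coord hp (fun k => d (xs k) (ys (σ k))) i₀
      have hyk : ys (σ i₀) = x₀ := by
        rcases hys (σ i₀) with h | h
        · rw [h, hx']
        · exact h
      rw [hx']
      simpa [hi₀, hyk] using hc
    · obtain ⟨j₀, hj₀⟩ := hym hx'
      by_cases h1 : ys (σ i₀) = x'
      · refine le_trans (min_le_left _ _) ?_
        have hc := lpNorm_coord hp (fun k => d (xs k) (ys (σ k))) i₀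
        simpa [hi₀, h1] using hc
      · have hy0 : ys (σ i₀) = x₀ := by
          rcases hys (σ i₀) with h | h
          · exact absurd h h1
          · exact h
        set i₁ := σ.symm j₀ with hi₁def
        have hne : i₀ ≠ i₁ := by
          intro hcontra
          apply h1
          rw [hcontra, hi₁def, Equiv.apply_symm_apply]
          exact hj₀
        by_cases h2 : xs i₁ = x
        · refine le_trans (min_le_left _ _) ?_
          have hc := lpNorm_coord hp (fun k => d (xs k) (ys (σ k))) i₁
          have h2' : xs (σ.symm j₀) = x := h2
          simpa [h2', hi₁def, Equiv.apply_symm_apply, hj₀] using hc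
        · have hx1 : xs i₁ = x₀ := by
            rcases hxs i₁ with h | h
            · exact absurd h h2
            · exact h
          refine le_trans (min_le_right _ _) ?_
          refine lpNorm_pair_le hp _ hne ?_ ?_
          · show d (xs i₀) (ys (σ i₀)) = d x x₀
            rw [hi₀, hy0]
          · show d (xs i₁) (ys (σ i₁)) = d x' x₀
            rw [hx1, hi₁def, Equiv.apply_symm_apply, hj₀, hd.symm]

end Helpers

/-- The canonical map `i : X → D(X,x₀)` is 1-Lipschitz; explicitly,
`W_p(i x, i x') = min (d x x') ‖(d x x₀, d x' x₀)‖_p ≤ d x x'`. -/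
theorem canonical_map_one_lipschitz (d : X → X → ℝ≥0∞) (hd : IsEPMetric d) (x₀ : X)
    (p : ℝ≥0∞) (hp : 1 ≤ p) (x x' : X) :
    Wp d x₀ p (diagι x₀ x) (diagι x₀ x')
        = min (d x x') (lpNorm p ![d x x₀, d x' x₀]) ∧
    Wp d x₀ p (diagι x₀ x) (diagι x₀ x') ≤ d x x' := by
  have hmain : Wp d x₀ p (diagι x₀ x) (diagι x₀ x')
      = min (d x x') (lpNorm p ![d x x₀, d x' x₀]) := by
    apply le_antisymm
    · -- upper bound
      have hWle : Wp d x₀ p (diagι x₀ x) (diagι x₀ x') ≤ WpM d x₀ p {x} {x'} := by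
        unfold Wp
        exact iInf_le_of_le {x} (iInf_le_of_le {x'} (iInf_le_of_le rfl (iInf_le _ rfl)))
      refine le_trans hWle ?_
      have hr2 : Multiset.card ({x} : Multiset X) + Multiset.card ({x'} : Multiset X) = 2 := by
        simp
      have hlx : ({x} : Multiset X).toList.length = 1 := by
        simp [Multiset.length_toList]
      have hlx' : ({x'} : Multiset X).toList.length = 1 := by
        simp [Multiset.length_toList]
      set r := Multiset.card ({x} : Multiset X) + Multiset.card ({x'} : Multiset X) with hrdef
      let j0 : Fin r := ⟨0, by omega⟩
      let j1 : Fin r := ⟨1, by omega⟩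
      have hne : j0 ≠ j1 := by simp [j0, j1, Fin.ext_iff]
      have hsx : ∀ z ∈ ({x} : Multiset X).toList, z = x := fun z hz =>
        Multiset.mem_singleton.1 (Multiset.mem_toList.1 hz)
      have hsx' : ∀ z ∈ ({x'} : Multiset X).toList, z = x' := fun z hz =>
        Multiset.mem_singleton.1 (Multiset.mem_toList.1 hz)
      have hxs0 : padTo x₀ (mFun {x}) r j0 = x := by
        show (if h : (0:ℕ) < ({x} : Multiset X).toList.length then mFun {x} ⟨0, h⟩ else x₀) = x
        rw [dif_pos (by omega)]
        exact hsx _ (List.get_mem _ _)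
      have hxs1 : padTo x₀ (mFun {x}) r j1 = x₀ := by
        show (if h : (1:ℕ) < ({x} : Multiset X).toList.length then mFun {x} ⟨1, h⟩ else x₀) = x₀
        rw [dif_neg (by omega)]
      have hys0 : padTo x₀ (mFun {x'}) r j0 = x' := by
        show (if h : (0:ℕ) < ({x'} : Multiset X).toList.length then mFun {x'} ⟨0, h⟩ else x₀) = x'
        rw [dif_pos (by omega)]
        exact hsx' _ (List.get_mem _ _)
      have hys1 : padTo x₀ (mFun {x'}) r j1 = x₀ := by
        show (if h : (1:ℕ) < ({x'} : Multiset X).toList.length then mFun {x'} ⟨1, h⟩ else x₀) = x₀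
        rw [dif_neg (by omega)]
      have hcase : ∀ k : Fin r, k = j0 ∨ k = j1 := by
        intro k
        have hk := k.2
        have hk' : (k : ℕ) = 0 ∨ (k : ℕ) = 1 := by omega
        rcases hk' with hk' | hk'
        · exact Or.inl (Fin.ext hk')
        · exact Or.inr (Fin.ext hk')
      refine le_min ?_ ?_
      · have step : WpM d x₀ p {x} {x'}
            ≤ lpNorm p (fun k => if k = j0 then d x x' else if k = j1 then 0 else 0) := by
          unfold WpM matchCost
          refine iInf_le_of_le (Equiv.refl _) (le_of_eq ?_)
          congr 1
          funext k
          rcases hcase k with rfl | rfl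
          · exact congrArg₂ d hxs0 hys0
          · exact (congrArg₂ d hxs1 hys1).trans (hd.refl x₀)
        refine le_trans step (le_trans (lpNorm_pair_ind hp hne _ _) ?_)
        rw [lpNorm_pair_zero hp]
      · have step : WpM d x₀ p {x} {x'}
            ≤ lpNorm p (fun k => if k = j0 then d x x₀ else if k = j1 then d x' x₀ else 0) := by
          unfold WpM matchCost
          refine iInf_le_of_le (Equiv.swap j0 j1) (le_of_eq ?_)
          congr 1
          funext k
          rcases hcase k with rfl | rfl
          · rw [Equiv.swap_apply_left]
            exact congrArg₂ d hxs0 hys1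
          · rw [Equiv.swap_apply_right]
            exact (congrArg₂ d hxs1 hys0).trans (hd.symm x₀ x')
        exact le_trans step (lpNorm_pair_ind hp hne _ _)
    · -- lower bound
      unfold Wp
      refine le_iInf fun s => le_iInf fun t => le_iInf fun hs => le_iInf fun ht => ?_
      have hs' : diagCon x₀ s {x} := (AddCon.eq _).1 hs
      have ht' : diagCon x₀ t {x'} := (AddCon.eq _).1 ht
      unfold WpM matchCost
      refine le_iInf fun σ => ?_
      refine key_lower hd hp x x' _ _ ?_ ?_ ?_ ?_ σ
      · intro k
        rcases padTo_spec s _ k with h | h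
        · exact rep_mem hs' _ h
        · exact Or.inr h
      · intro k
        rcases padTo_spec t _ k with h | h
        · exact rep_mem ht' _ h
        · exact Or.inr h
      · intro hxne
        exact padTo_exists (rep_self_mem hs' hxne) (Nat.le_add_right _ _)
      · intro hxne
        exact padTo_exists (rep_self_mem ht' hxne) (Nat.le_add_left _ _)
  exact ⟨hmain, hmain ▸ min_le_left _ _⟩

end
end

section
/- For any pointed extended pseudometric space (X, d, x₀) and p ∈ [1, ∞], the p-Wasserstein distance W_p[d, x₀] is p-subadditive: W_p(α + β, γ + δ) ≤ ‖(W_p(α, γ), W_p(β, δ))‖_p for all persistence diagrams α, β, γ, δ ∈ D(X, x₀). -/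
open scoped ENNReal BigOperators
noncomputable section

variable {X : Type*}

/-! ### Auxiliary lemmas -/

section Aux

open Function

lemma iSup_fin_two (f : Fin 2 → ℝ≥0∞) : ⨆ i, f i = f 0 ⊔ f 1 := by
  apply le_antisymm
  · exact iSup_le fun i => by fin_cases i <;> [exact le_sup_left; exact le_sup_right]
  · exact sup_le (le_iSup f 0) (le_iSup f 1)

lemma lpNorm_pair (p : ℝ≥0∞) (a b : ℝ≥0∞) :
    lpNorm p ![a, b] = if p = ∞ then a ⊔ b
      else (a ^ p.toReal + b ^ p.toReal) ^ (1 / p.toReal) := by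
  unfold lpNorm
  split
  · rw [iSup_fin_two]; simp
  · rw [Fin.sum_univ_two]; simp

lemma lpNorm_comp_perm (p : ℝ≥0∞) {n : ℕ} (v : Fin n → ℝ≥0∞) (σ : Equiv.Perm (Fin n)) :
    lpNorm p (v ∘ σ) = lpNorm p v := by
  unfold lpNorm
  split
  · exact σ.iSup_comp (g := v)
  · simp only [Function.comp_apply]
    rw [Equiv.sum_comp σ (fun i => v i ^ p.toReal)]

lemma ennreal_rpow_iInf {ι : Sort*} (c : ℝ) (hc : 0 < c) (f : ι → ℝ≥0∞) :
    (⨅ i, f i) ^ c = ⨅ i, (f i) ^ c := by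
  have h := OrderIso.map_iInf (ENNReal.orderIsoRpow c hc) f
  simp only [ENNReal.orderIsoRpow_apply] at h
  exact h

lemma lpNorm_append (p : ℝ≥0∞) (hp : p ≠ 0) {r₁ r₂ : ℕ}
    (v : Fin r₁ → ℝ≥0∞) (w : Fin r₂ → ℝ≥0∞) :
    lpNorm p (Fin.append v w) = lpNorm p ![lpNorm p v, lpNorm p w] := by
  rcases eq_or_ne p ∞ with h | h
  · rw [lpNorm_pair, if_pos h]
    unfold lpNorm
    rw [if_pos h, if_pos h, if_pos h, ← finSumFinEquiv.iSup_comp (g := Fin.append v w),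
      iSup_sum]
    simp [Fin.append_left, Fin.append_right]
  · have hc : 0 < p.toReal := ENNReal.toReal_pos hp h
    rw [lpNorm_pair, if_neg h]
    unfold lpNorm
    rw [if_neg h, if_neg h, if_neg h]
    congr 1
    rw [Fin.sum_univ_add]
    have e1 : ((∑ i, v i ^ p.toReal) ^ (1 / p.toReal)) ^ p.toReal
        = ∑ i, v i ^ p.toReal := by
      rw [← ENNReal.rpow_mul, one_div_mul_cancel hc.ne', ENNReal.rpow_one]
    have e2 : ((∑ i, w i ^ p.toReal) ^ (1 / p.toReal)) ^ p.toReal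
        = ∑ i, w i ^ p.toReal := by
      rw [← ENNReal.rpow_mul, one_div_mul_cancel hc.ne', ENNReal.rpow_one]
    simp only [Fin.append_left, Fin.append_right, Fin.sum_univ_two,
      Matrix.cons_val_zero, Matrix.cons_val_one, Matrix.head_cons]
    rw [e1, e2]

lemma lpNorm_two_iInf (p : ℝ≥0∞) (hp : p ≠ 0) {ι κ : Sort*}
    (f : ι → ℝ≥0∞) (g : κ → ℝ≥0∞) :
    lpNorm p ![⨅ i, f i, ⨅ j, g j] = ⨅ i, ⨅ j, lpNorm p ![f i, g j] := by
  rcases eq_or_ne p ∞ with h | h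
  · simp only [lpNorm_pair, if_pos h]
    rw [iInf_sup_eq]
    exact iInf_congr fun i => sup_iInf_eq _ _
  · have hc : 0 < p.toReal := ENNReal.toReal_pos hp h
    have hc' : 0 < 1 / p.toReal := by positivity
    simp only [lpNorm_pair, if_neg h]
    rw [ennreal_rpow_iInf _ hc f, ennreal_rpow_iInf _ hc g, ENNReal.iInf_add,
      ennreal_rpow_iInf _ hc']
    refine iInf_congr fun i => ?_
    rw [ENNReal.add_iInf, ennreal_rpow_iInf _ hc']

variable (d : X → X → ℝ≥0∞) (p : ℝ≥0∞)

lemma exists_matchCost_eq {r : ℕ} (x y : Fin r → X) :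
    ∃ σ : Equiv.Perm (Fin r),
      matchCost d p x y = lpNorm p (fun k => d (x k) (y (σ k))) := by
  obtain ⟨σ₀, h⟩ := Finite.exists_min
    (fun σ : Equiv.Perm (Fin r) => lpNorm p fun k => d (x k) (y (σ k)))
  exact ⟨σ₀, le_antisymm (iInf_le _ _) (le_iInf h)⟩

lemma matchCost_comp {r : ℕ} (x y : Fin r → X) (τ₁ τ₂ : Equiv.Perm (Fin r)) :
    matchCost d p (x ∘ τ₁) (y ∘ τ₂) = matchCost d p x y := by
  unfold matchCost
  apply le_antisymm
  · refine le_iInf fun σ => iInf_le_of_le ((τ₁.trans σ).trans τ₂.symm) (le_of_eq ?_)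
    have h : (fun k => d ((x ∘ τ₁) k) ((y ∘ τ₂) (((τ₁.trans σ).trans τ₂.symm) k)))
        = (fun k => d (x k) (y (σ k))) ∘ τ₁ := by
      funext k; simp [Function.comp]
    rw [h, lpNorm_comp_perm]
  · refine le_iInf fun σ => iInf_le_of_le ((τ₁.symm.trans σ).trans τ₂) (le_of_eq ?_)
    have h : (fun k => d (x k) (y ((((τ₁.symm.trans σ).trans τ₂)) k)))
        = (fun k => d ((x ∘ τ₁) k) ((y ∘ τ₂) (σ k))) ∘ τ₁.symm := by
      funext k; simp [Function.comp]
    rw [h, lpNorm_comp_perm]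

lemma exists_perm_of_multiset_eq {r : ℕ} (x x' : Fin r → X)
    (h : (List.ofFn x : Multiset X) = (List.ofFn x' : Multiset X)) :
    ∃ σ : Equiv.Perm (Fin r), x' = x ∘ σ := by
  classical
  letI : LinearOrder X := linearOrderOfSTO WellOrderingRel
  have hperm : List.Perm (List.ofFn x) (List.ofFn x') := Multiset.coe_eq_coe.mp h
  have h1 : List.Perm (List.ofFn (x ∘ Tuple.sort x)) (List.ofFn (x' ∘ Tuple.sort x')) :=
    (((Tuple.sort x).ofFn_comp_perm x).trans hperm).trans
      ((Tuple.sort x').ofFn_comp_perm x').symm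
  have h2 : x ∘ Tuple.sort x = x' ∘ Tuple.sort x' :=
    List.ofFn_injective (List.Perm.eq_of_sortedLE
      (List.sortedLE_ofFn_iff.mpr (Tuple.monotone_sort x))
      (List.sortedLE_ofFn_iff.mpr (Tuple.monotone_sort x')) h1)
  refine ⟨(Tuple.sort x').symm.trans (Tuple.sort x), funext fun k => ?_⟩
  have := congrFun h2 ((Tuple.sort x').symm k)
  simpa using this.symm

lemma matchCost_congr {r r' : ℕ} (h : r' = r) (x y : Fin r → X) (x' y' : Fin r' → X)
    (hx : (List.ofFn x' : Multiset X) = (List.ofFn x : Multiset X))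
    (hy : (List.ofFn y' : Multiset X) = (List.ofFn y : Multiset X)) :
    matchCost d p x' y' = matchCost d p x y := by
  subst h
  obtain ⟨σ₁, rfl⟩ := exists_perm_of_multiset_eq x x' hx.symm
  obtain ⟨σ₂, rfl⟩ := exists_perm_of_multiset_eq y y' hy.symm
  exact matchCost_comp d p x y σ₁ σ₂

lemma matchCost_append (hp : p ≠ 0) {r₁ r₂ : ℕ}
    (x₁ y₁ : Fin r₁ → X) (x₂ y₂ : Fin r₂ → X) :
    matchCost d p (Fin.append x₁ x₂) (Fin.append y₁ y₂) ≤
      lpNorm p ![matchCost d p x₁ y₁, matchCost d p x₂ y₂] := by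
  obtain ⟨σ₁, h₁⟩ := exists_matchCost_eq d p x₁ y₁
  obtain ⟨σ₂, h₂⟩ := exists_matchCost_eq d p x₂ y₂
  rw [h₁, h₂, ← lpNorm_append p hp]
  refine iInf_le_of_le (finSumFinEquiv.permCongr (σ₁.sumCongr σ₂)) (le_of_eq ?_)
  congr 1
  funext k
  refine Fin.addCases (fun i => ?_) (fun i => ?_) k
  · simp [Fin.append_left, Equiv.permCongr_apply]
  · simp [Fin.append_right, Equiv.permCongr_apply]

lemma multiset_ofFn_padTo (x₀ : X) {n : ℕ} (x : Fin n → X) {r : ℕ} (h : n ≤ r) :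
    (List.ofFn (padTo x₀ x r) : Multiset X)
      = (List.ofFn x : Multiset X) + Multiset.replicate (r - n) x₀ := by
  obtain ⟨e, rfl⟩ := Nat.exists_eq_add_of_le h
  have h1 : (fun i : Fin n => padTo x₀ x (n + e) (Fin.castAdd e i)) = x := by
    funext i
    simp only [padTo, Fin.coe_castAdd]
    rw [dif_pos i.isLt]
  have h2 : (fun j : Fin e => padTo x₀ x (n + e) (Fin.natAdd n j)) = fun _ => x₀ := by
    funext j
    simp only [padTo, Fin.coe_natAdd]
    rw [dif_neg (by omega)]
  rw [List.ofFn_add, show (fun i : Fin n => padTo x₀ x (n + e) (Fin.castLE (by omega) i)) = x from h1,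
    h2, List.ofFn_const]
  rw [← Multiset.coe_add, Nat.add_sub_cancel_left]
  simp [Multiset.coe_replicate]

lemma multiset_ofFn_mFun (s : Multiset X) : (List.ofFn (mFun s) : Multiset X) = s := by
  have h : List.ofFn (mFun s) = s.toList := List.ofFn_get s.toList
  rw [h, Multiset.coe_toList]

lemma WpM_add_le (hp : p ≠ 0) (x₀ : X) (s s' t t' : Multiset X) :
    WpM d x₀ p (s + s') (t + t') ≤ lpNorm p ![WpM d x₀ p s t, WpM d x₀ p s' t'] := by
  classical
  have hcard : Multiset.card (s + s') + Multiset.card (t + t')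
      = (Multiset.card s + Multiset.card t) + (Multiset.card s' + Multiset.card t') := by
    simp only [Multiset.card_add]; omega
  have hxmul : (List.ofFn (padTo x₀ (mFun (s + s'))
        (Multiset.card (s + s') + Multiset.card (t + t'))) : Multiset X)
      = (List.ofFn (Fin.append
          (padTo x₀ (mFun s) (Multiset.card s + Multiset.card t))
          (padTo x₀ (mFun s') (Multiset.card s' + Multiset.card t'))) : Multiset X) := by
    rw [List.ofFn_fin_append, ← Multiset.coe_add,
      multiset_ofFn_padTo x₀ (mFun (s + s'))
        (by simp only [Multiset.length_toList, Multiset.card_add]; omega),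
      multiset_ofFn_padTo x₀ (mFun s) (by simp only [Multiset.length_toList]; omega),
      multiset_ofFn_padTo x₀ (mFun s') (by simp only [Multiset.length_toList]; omega),
      multiset_ofFn_mFun, multiset_ofFn_mFun, multiset_ofFn_mFun]
    simp only [Multiset.length_toList, Multiset.card_add]
    have e0 : Multiset.card s + Multiset.card s' + (Multiset.card t + Multiset.card t')
        - (Multiset.card s + Multiset.card s') = Multiset.card t + Multiset.card t' := by
      omega
    have e1 : Multiset.card s + Multiset.card t - Multiset.card s = Multiset.card t := by
      omega
    have e2 : Multiset.card s' + Multiset.card t' - Multiset.card s'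
        = Multiset.card t' := by omega
    rw [e0, e1, e2, Multiset.replicate_add]
    simp only [add_comm, add_left_comm, add_assoc]
  have hymul : (List.ofFn (padTo x₀ (mFun (t + t'))
        (Multiset.card (s + s') + Multiset.card (t + t'))) : Multiset X)
      = (List.ofFn (Fin.append
          (padTo x₀ (mFun t) (Multiset.card s + Multiset.card t))
          (padTo x₀ (mFun t') (Multiset.card s' + Multiset.card t'))) : Multiset X) := by
    rw [List.ofFn_fin_append, ← Multiset.coe_add,
      multiset_ofFn_padTo x₀ (mFun (t + t'))
        (by simp only [Multiset.length_toList, Multiset.card_add]; omega),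
      multiset_ofFn_padTo x₀ (mFun t) (by simp only [Multiset.length_toList]; omega),
      multiset_ofFn_padTo x₀ (mFun t') (by simp only [Multiset.length_toList]; omega),
      multiset_ofFn_mFun, multiset_ofFn_mFun, multiset_ofFn_mFun]
    simp only [Multiset.length_toList, Multiset.card_add]
    have e0 : Multiset.card s + Multiset.card s' + (Multiset.card t + Multiset.card t')
        - (Multiset.card t + Multiset.card t') = Multiset.card s + Multiset.card s' := by
      omega
    have e1 : Multiset.card s + Multiset.card t - Multiset.card t = Multiset.card s := by
      omega
    have e2 : Multiset.card s' + Multiset.card t' - Multiset.card t'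
        = Multiset.card s' := by omega
    rw [e0, e1, e2, Multiset.replicate_add]
    simp only [add_comm, add_left_comm, add_assoc]
  have key : WpM d x₀ p (s + s') (t + t')
      = matchCost d p
          (Fin.append (padTo x₀ (mFun s) (Multiset.card s + Multiset.card t))
            (padTo x₀ (mFun s') (Multiset.card s' + Multiset.card t')))
          (Fin.append (padTo x₀ (mFun t) (Multiset.card s + Multiset.card t))
            (padTo x₀ (mFun t') (Multiset.card s' + Multiset.card t'))) :=
    matchCost_congr d p hcard _ _ _ _ hxmul hymul
  rw [key]
  exact matchCost_append d p hp _ _ _ _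

lemma Wp_eq_iInf_subtype (x₀ : X) (α γ : Diagram X x₀) :
    Wp d x₀ p α γ = ⨅ z : {st : Multiset X × Multiset X //
        (diagCon x₀).mk' st.1 = α ∧ (diagCon x₀).mk' st.2 = γ},
      WpM d x₀ p z.1.1 z.1.2 := by
  apply le_antisymm
  · refine le_iInf fun z => ?_
    obtain ⟨⟨s, t⟩, hs, ht⟩ := z
    exact iInf_le_of_le s (iInf_le_of_le t (iInf_le_of_le hs (iInf_le _ ht)))
  · exact le_iInf fun s => le_iInf fun t => le_iInf fun hs => le_iInf fun ht =>
      iInf_le_of_le ⟨(s, t), hs, ht⟩ le_rfl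

end Aux

/-- The p-Wasserstein distance is p-subadditive. -/
theorem wasserstein_p_subadditive (d : X → X → ℝ≥0∞) (hd : IsEPMetric d) (x₀ : X)
    (p : ℝ≥0∞) (hp : 1 ≤ p) (α β γ δ : Diagram X x₀) :
    Wp d x₀ p (α + β) (γ + δ) ≤ lpNorm p ![Wp d x₀ p α γ, Wp d x₀ p β δ] := by
  have hp0 : p ≠ 0 := (zero_lt_one.trans_le hp).ne'
  rw [Wp_eq_iInf_subtype d p x₀ α γ, Wp_eq_iInf_subtype d p x₀ β δ,
    lpNorm_two_iInf p hp0]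
  refine le_iInf fun z => le_iInf fun w => ?_
  obtain ⟨⟨s, t⟩, hs, ht⟩ := z
  obtain ⟨⟨s', t'⟩, hs', ht'⟩ := w
  have h1 : Wp d x₀ p (α + β) (γ + δ) ≤ WpM d x₀ p (s + s') (t + t') := by
    refine iInf_le_of_le (s + s') (iInf_le_of_le (t + t') (iInf_le_of_le ?_ (iInf_le _ ?_)))
    · rw [map_add]; exact congrArg₂ (· + ·) hs hs'
    · rw [map_add]; exact congrArg₂ (· + ·) ht ht'
  exact h1.trans (WpM_add_le d p hp0 x₀ s s' t t')

end
end

section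
/- Universality of the Wasserstein distance: let (X, d, x₀) be a pointed extended pseudometric space, p ∈ [1, ∞], and (N, ρ, +, 0) a commutative monoid with a p-subadditive extended pseudometric. For every Lipschitz basepoint-preserving map φ : X → N there exists a unique Lipschitz monoid homomorphism φ̃ : (D(X, x₀), W_p[d, x₀]) → (N, ρ) with φ̃ ∘ i = φ, and moreover the Lipschitz norm ‖φ̃‖_Lip equals ‖φ‖_Lip. -/
open scoped ENNReal BigOperators
noncomputable section

variable {X : Type*}

namespace WUaux

lemma toReal_pos {p : ℝ≥0∞} (hp : 1 ≤ p) (hne : p ≠ ∞) : 0 < p.toReal :=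
  lt_of_lt_of_le one_pos (by simpa using ENNReal.toReal_mono hne hp)

lemma lpNorm_mono {p : ℝ≥0∞} {n : ℕ} {v w : Fin n → ℝ≥0∞} (h : ∀ i, v i ≤ w i) :
    lpNorm p v ≤ lpNorm p w := by
  unfold lpNorm
  split
  · exact iSup_mono h
  · exact ENNReal.rpow_le_rpow
      (Finset.sum_le_sum fun i _ => ENNReal.rpow_le_rpow (h i) ENNReal.toReal_nonneg)
      (by positivity)

lemma iSup_cons {n : ℕ} (u : ℝ≥0∞) (v : Fin n → ℝ≥0∞) :
    (⨆ i, (Fin.cons u v : Fin (n+1) → ℝ≥0∞) i) = u ⊔ ⨆ i, v i := by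
  refine le_antisymm (iSup_le ?_)
    (sup_le (le_iSup_of_le 0 (by simp)) (iSup_le fun i => le_iSup_of_le i.succ (by simp)))
  intro i
  refine Fin.cases ?_ ?_ i
  · simp
  · intro j; simpa using le_sup_of_le_right (le_iSup v j)

lemma iSup_fin_two (a b : ℝ≥0∞) : (⨆ i, (![a, b]) i) = a ⊔ b := by
  simpa [Matrix.cons_val_zero, Matrix.cons_val_one] using iSup_cons a ![b]

lemma lpNorm_cons {p : ℝ≥0∞} (hp : 1 ≤ p) {n : ℕ} (u : ℝ≥0∞) (v : Fin n → ℝ≥0∞) :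
    lpNorm p (Fin.cons u v) = lpNorm p ![u, lpNorm p v] := by
  unfold lpNorm
  split_ifs with h
  · rw [iSup_cons, iSup_fin_two]
  · have hq : 0 < p.toReal := toReal_pos hp h
    rw [Fin.sum_univ_succ, Fin.sum_univ_two]
    simp only [Fin.cons_zero, Fin.cons_succ, Matrix.cons_val_zero, Matrix.cons_val_one,
      Matrix.head_cons]
    rw [← ENNReal.rpow_mul, one_div_mul_cancel hq.ne', ENNReal.rpow_one]

lemma lpNorm_mul {p : ℝ≥0∞} (hp : 1 ≤ p) {n : ℕ} (c : ℝ≥0∞) (v : Fin n → ℝ≥0∞) :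
    lpNorm p (fun i => c * v i) = c * lpNorm p v := by
  unfold lpNorm
  split_ifs with h
  · exact (ENNReal.mul_iSup c v).symm
  · have hq : 0 < p.toReal := toReal_pos hp h
    have h1 : ∀ i : Fin n, (c * v i) ^ p.toReal = c ^ p.toReal * v i ^ p.toReal :=
      fun i => ENNReal.mul_rpow_of_nonneg _ _ ENNReal.toReal_nonneg
    rw [Finset.sum_congr rfl fun i _ => h1 i, ← Finset.mul_sum,
      ENNReal.mul_rpow_of_nonneg _ _ (by positivity), ← ENNReal.rpow_mul,
      mul_one_div_cancel hq.ne', ENNReal.rpow_one]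

lemma lpNorm_single {p : ℝ≥0∞} (hp : 1 ≤ p) {n : ℕ} (v : Fin n → ℝ≥0∞) (k₀ : Fin n)
    (h : ∀ k, k ≠ k₀ → v k = 0) : lpNorm p v ≤ v k₀ := by
  unfold lpNorm
  split_ifs with hpi
  · refine iSup_le fun k => ?_
    by_cases hk : k = k₀
    · subst hk; exact le_rfl
    · simp [h k hk]
  · have hq : 0 < p.toReal := toReal_pos hp hpi
    have hs : (∑ i, v i ^ p.toReal) = v k₀ ^ p.toReal :=
      Finset.sum_eq_single k₀
        (fun k _ hk => by simp [h k hk, ENNReal.zero_rpow_of_pos hq]) (by simp)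
    rw [hs, ← ENNReal.rpow_mul, mul_one_div_cancel hq.ne', ENNReal.rpow_one]

variable {X : Type*} {N : Type*} [AddCommMonoid N]

lemma rho_sum {p : ℝ≥0∞} (hp : 1 ≤ p) (ρ : N → N → ℝ≥0∞) (hρ : IsEPMetric ρ)
    (hsub : ∀ a a' b b' : N, ρ (a + b) (a' + b') ≤ lpNorm p ![ρ a a', ρ b b']) :
    ∀ (n : ℕ) (a b : Fin n → N),
      ρ (∑ i, a i) (∑ i, b i) ≤ lpNorm p (fun i => ρ (a i) (b i)) := by
  intro n
  induction n with
  | zero => intro a b; simp [hρ.refl]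
  | succ n ih =>
    intro a b
    rw [Fin.sum_univ_succ, Fin.sum_univ_succ]
    calc ρ (a 0 + ∑ i : Fin n, a i.succ) (b 0 + ∑ i : Fin n, b i.succ)
        ≤ lpNorm p ![ρ (a 0) (b 0), ρ (∑ i : Fin n, a i.succ) (∑ i : Fin n, b i.succ)] :=
          hsub _ _ _ _
      _ ≤ lpNorm p ![ρ (a 0) (b 0), lpNorm p (fun i : Fin n => ρ (a i.succ) (b i.succ))] := by
          refine lpNorm_mono fun i => ?_
          refine Fin.cases ?_ ?_ i
          · simp
          · intro j; fin_cases j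
            simpa using ih (fun i => a i.succ) (fun i => b i.succ)
      _ = lpNorm p (Fin.cons (ρ (a 0) (b 0)) (fun i : Fin n => ρ (a i.succ) (b i.succ))) :=
          (lpNorm_cons hp _ _).symm
      _ = lpNorm p (fun i => ρ (a i) (b i)) := by
          congr 1; funext i
          refine Fin.cases ?_ ?_ i <;> simp

/-- Summing `φ` over a multiset, as an additive monoid hom. -/
def sumHom (φ : X → N) : Multiset X →+ N where
  toFun s := (s.map φ).sum
  map_zero' := by simp
  map_add' s t := by simp

lemma sumHom_replicate (φ : X → N) (x₀ : X) (hφ₀ : φ x₀ = 0) (a : ℕ) :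
    sumHom φ (Multiset.replicate a x₀) = 0 := by
  show ((Multiset.replicate a x₀).map φ).sum = 0
  simp [sumHom, Multiset.map_replicate, hφ₀]

lemma sum_pad (x₀ : X) (φ : X → N) (hφ₀ : φ x₀ = 0) (s : Multiset X) (r : ℕ)
    (hr : s.toList.length ≤ r) :
    ∑ k : Fin r, φ (padTo x₀ (mFun s) r k) = sumHom φ s := by
  set l := s.toList with hl
  set g : ℕ → N := fun i => if h : i < l.length then φ (l.get ⟨i, h⟩) else 0 with hg
  have h1 : ∀ k : Fin r, φ (padTo x₀ (mFun s) r k) = g k := by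
    intro k
    by_cases h : (k : ℕ) < l.length <;> simp [padTo, mFun, g, h, hφ₀, ← hl]
  rw [Finset.sum_congr rfl fun k _ => h1 k]
  rw [Fin.sum_univ_eq_sum_range g r]
  rw [← Finset.sum_subset (Finset.range_subset_range.mpr hr)
    (fun i _ hi => dif_neg (by simpa using hi))]
  rw [← Fin.sum_univ_eq_sum_range g l.length]
  have h2 : ∀ k : Fin l.length, g k = φ (l.get k) := fun k => dif_pos k.isLt
  rw [Finset.sum_congr rfl fun k _ => h2 k]
  show _ = (s.map φ).sum
  conv_rhs => rw [← Multiset.coe_toList s]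
  rw [Multiset.map_coe, Multiset.sum_coe, ← Fin.sum_univ_fun_getElem l φ]
  rfl

/-- The extension of `φ` to the diagram monoid. -/
def diagLift (x₀ : X) (φ : X → N) (hφ₀ : φ x₀ = 0) : Diagram X x₀ →+ N :=
  (diagCon x₀).lift (sumHom φ) (by
    rintro s t ⟨a, b, h⟩
    show sumHom φ s = sumHom φ t
    have h2 := congrArg (sumHom φ) h
    rwa [map_add, map_add, sumHom_replicate φ x₀ hφ₀, sumHom_replicate φ x₀ hφ₀,
      add_zero, add_zero] at h2)

lemma diagLift_mk' (x₀ : X) (φ : X → N) (hφ₀ : φ x₀ = 0) (s : Multiset X) :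
    diagLift x₀ φ hφ₀ ((diagCon x₀).mk' s) = sumHom φ s :=
  AddCon.lift_mk' _ _

lemma diagLift_diagι (x₀ : X) (φ : X → N) (hφ₀ : φ x₀ = 0) (x : X) :
    diagLift x₀ φ hφ₀ (diagι x₀ x) = φ x := by
  rw [diagι, diagLift_mk']
  show (({x} : Multiset X).map φ).sum = φ x
  simp [sumHom]

lemma key (d : X → X → ℝ≥0∞) (x₀ : X) (p : ℝ≥0∞) (hp : 1 ≤ p)
    (ρ : N → N → ℝ≥0∞) (hρ : IsEPMetric ρ)
    (hsub : ∀ a a' b b' : N, ρ (a + b) (a' + b') ≤ lpNorm p ![ρ a a', ρ b b'])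
    (φ : X → N) (hφ₀ : φ x₀ = 0) (C' : ℝ≥0∞)
    (hLip : ∀ x y : X, ρ (φ x) (φ y) ≤ C' * d x y) (s t : Multiset X) :
    ρ (sumHom φ s) (sumHom φ t) ≤ C' * WpM d x₀ p s t := by
  set r := Multiset.card s + Multiset.card t with hr
  set xs := padTo x₀ (mFun s) r with hxs
  set ys := padTo x₀ (mFun t) r with hys
  obtain ⟨σ, hσ⟩ := Finite.exists_min fun σ : Equiv.Perm (Fin r) =>
    lpNorm p (fun k => d (xs k) (ys (σ k)))
  have hW : WpM d x₀ p s t = lpNorm p (fun k => d (xs k) (ys (σ k))) :=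
    le_antisymm (iInf_le _ σ) (le_iInf hσ)
  have hcs : s.toList.length ≤ r := by
    rw [Multiset.length_toList]; exact Nat.le_add_right _ _
  have hct : t.toList.length ≤ r := by
    rw [Multiset.length_toList]; exact Nat.le_add_left _ _
  have e1 : sumHom φ s = ∑ k : Fin r, φ (xs k) := (sum_pad x₀ φ hφ₀ s r hcs).symm
  have e2 : sumHom φ t = ∑ k : Fin r, φ (ys (σ k)) := by
    rw [← sum_pad x₀ φ hφ₀ t r hct]
    exact (Equiv.sum_comp σ fun k => φ (ys k)).symm
  rw [e1, e2, hW]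
  calc ρ (∑ k : Fin r, φ (xs k)) (∑ k : Fin r, φ (ys (σ k)))
      ≤ lpNorm p (fun k => ρ (φ (xs k)) (φ (ys (σ k)))) := rho_sum hp ρ hρ hsub r _ _
    _ ≤ lpNorm p (fun k => C' * d (xs k) (ys (σ k))) := lpNorm_mono fun k => hLip _ _
    _ = C' * lpNorm p (fun k => d (xs k) (ys (σ k))) := lpNorm_mul hp _ _

lemma keyQ (d : X → X → ℝ≥0∞) (x₀ : X) (p : ℝ≥0∞) (hp : 1 ≤ p)
    (ρ : N → N → ℝ≥0∞) (hρ : IsEPMetric ρ)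
    (hsub : ∀ a a' b b' : N, ρ (a + b) (a' + b') ≤ lpNorm p ![ρ a a', ρ b b'])
    (φ : X → N) (hφ₀ : φ x₀ = 0) (C' : ℝ≥0∞) (hC' : C' ≠ ∞)
    (hLip : ∀ x y : X, ρ (φ x) (φ y) ≤ C' * d x y) (α β : Diagram X x₀) :
    ρ (diagLift x₀ φ hφ₀ α) (diagLift x₀ φ hφ₀ β) ≤ C' * Wp d x₀ p α β := by
  obtain ⟨s₀, rfl⟩ := AddCon.mk'_surjective α
  obtain ⟨t₀, rfl⟩ := AddCon.mk'_surjective β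
  rcases eq_or_ne C' 0 with rfl | h0
  · have h := key d x₀ p hp ρ hρ hsub φ hφ₀ 0 hLip s₀ t₀
    rw [zero_mul] at h ⊢
    rwa [diagLift_mk', diagLift_mk']
  · rw [mul_comm, ← ENNReal.div_le_iff_le_mul (Or.inl h0) (Or.inl hC')]
    rw [Wp]
    refine le_iInf fun s => le_iInf fun t => le_iInf fun h1 => le_iInf fun h2 => ?_
    rw [ENNReal.div_le_iff_le_mul (Or.inl h0) (Or.inl hC'), mul_comm]
    rw [← h1, ← h2, diagLift_mk', diagLift_mk']
    exact key d x₀ p hp ρ hρ hsub φ hφ₀ C' hLip s t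

lemma Wp_diagι_le (d : X → X → ℝ≥0∞) (hd : IsEPMetric d) (x₀ : X) (p : ℝ≥0∞) (hp : 1 ≤ p)
    (x y : X) : Wp d x₀ p (diagι x₀ x) (diagι x₀ y) ≤ d x y := by
  refine le_trans (iInf_le_of_le {x} (iInf_le_of_le {y}
    (iInf_le_of_le rfl (iInf_le _ rfl)))) ?_
  rw [WpM]
  refine le_trans (iInf_le _ (Equiv.refl _)) ?_
  set r := Multiset.card ({x} : Multiset X) + Multiset.card ({y} : Multiset X) with hrr
  have hr2 : r = 2 := by simp [hrr]
  have hrpos : 0 < r := by omega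
  set k₀ : Fin r := ⟨0, hrpos⟩ with hk₀
  have hx0 : padTo x₀ (mFun ({x} : Multiset X)) r k₀ = x := by
    simp [padTo, mFun, Multiset.toList_singleton, k₀]
  have hy0 : padTo x₀ (mFun ({y} : Multiset X)) r k₀ = y := by
    simp [padTo, mFun, Multiset.toList_singleton, k₀]
  have hzero : ∀ k : Fin r, k ≠ k₀ →
      d (padTo x₀ (mFun ({x} : Multiset X)) r k)
        (padTo x₀ (mFun ({y} : Multiset X)) r ((Equiv.refl (Fin r)) k)) = 0 := by
    intro k hk
    have hk' : ¬ ((k : ℕ) < 1) := by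
      have : (k : ℕ) ≠ 0 := fun h => hk (Fin.ext h)
      omega
    have h1 : padTo x₀ (mFun ({x} : Multiset X)) r k = x₀ := by
      simp only [padTo, mFun, Multiset.toList_singleton]
      rw [dif_neg (by simpa using hk')]
    have h2 : padTo x₀ (mFun ({y} : Multiset X)) r ((Equiv.refl (Fin r)) k) = x₀ := by
      simp only [padTo, mFun, Multiset.toList_singleton, Equiv.refl_apply]
      exact dif_neg (by simpa using hk')
    rw [h1, h2, hd.refl]
  refine le_trans (lpNorm_single hp _ k₀ hzero) ?_
  rw [Equiv.refl_apply, hx0, hy0]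

end WUaux

open WUaux in
/-- Universality of the Wasserstein distance: every Lipschitz basepoint-preserving map
`φ : X → N` into a commutative monoid with a p-subadditive extended pseudometric extends
uniquely to a Lipschitz monoid homomorphism `φ̃ : D(X,x₀) → N`, and `‖φ̃‖_Lip = ‖φ‖_Lip`. -/
theorem wasserstein_universal (d : X → X → ℝ≥0∞) (hd : IsEPMetric d) (x₀ : X)
    (p : ℝ≥0∞) (hp : 1 ≤ p) {N : Type*} [AddCommMonoid N]
    (ρ : N → N → ℝ≥0∞) (hρ : IsEPMetric ρ)
    (hsub : ∀ a a' b b' : N, ρ (a + b) (a' + b') ≤ lpNorm p ![ρ a a', ρ b b'])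
    (φ : X → N) (hφ₀ : φ x₀ = 0)
    (C : ℝ≥0∞) (hC : C ≠ ∞) (hLip : ∀ x y : X, ρ (φ x) (φ y) ≤ C * d x y) :
    (∃! φt : Diagram X x₀ →+ N,
      (∃ C' : ℝ≥0∞, C' ≠ ∞ ∧ ∀ α β : Diagram X x₀, ρ (φt α) (φt β) ≤ C' * Wp d x₀ p α β) ∧
      ∀ x : X, φt (diagι x₀ x) = φ x) ∧
    (∀ φt : Diagram X x₀ →+ N,
      ((∃ C' : ℝ≥0∞, C' ≠ ∞ ∧ ∀ α β : Diagram X x₀, ρ (φt α) (φt β) ≤ C' * Wp d x₀ p α β) ∧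
        ∀ x : X, φt (diagι x₀ x) = φ x) →
      eLipNorm (Wp d x₀ p) ρ (⇑φt) = eLipNorm d ρ φ) := by
  have huniq : ∀ ψ : Diagram X x₀ →+ N, (∀ x : X, ψ (diagι x₀ x) = φ x) →
      ψ = diagLift x₀ φ hφ₀ := by
    intro ψ hψ
    refine AddMonoidHom.ext fun α => ?_
    refine AddCon.induction_on α fun s => ?_
    refine Multiset.induction_on s ?_ ?_
    · show ψ ((diagCon x₀).mk' 0) = diagLift x₀ φ hφ₀ ((diagCon x₀).mk' 0)
      rw [map_zero, map_zero, map_zero]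
    · intro x s ih
      show ψ ((diagCon x₀).mk' (x ::ₘ s)) = diagLift x₀ φ hφ₀ ((diagCon x₀).mk' (x ::ₘ s))
      have hcons : (diagCon x₀).mk' (x ::ₘ s) = diagι x₀ x + (diagCon x₀).mk' s := by
        rw [← Multiset.singleton_add, map_add]; rfl
      have ih' : ψ ((diagCon x₀).mk' s) = diagLift x₀ φ hφ₀ ((diagCon x₀).mk' s) := ih
      rw [hcons, map_add, map_add, hψ, diagLift_diagι, ih']
  constructor
  · refine ⟨diagLift x₀ φ hφ₀,
      ⟨⟨C, hC, keyQ d x₀ p hp ρ hρ hsub φ hφ₀ C hC hLip⟩, diagLift_diagι x₀ φ hφ₀⟩,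
      fun ψ hψ => huniq ψ hψ.2⟩
  · intro φt hcond
    obtain ⟨⟨C', hC', hL⟩, hι⟩ := hcond
    have hφt := huniq φt hι
    subst hφt
    apply le_antisymm
    · refine le_sInf fun b hb => ?_
      rcases eq_or_ne b ∞ with rfl | hbne
      · exact le_top
      · exact sInf_le fun α β => keyQ d x₀ p hp ρ hρ hsub φ hφ₀ b hbne hb α β
    · refine le_sInf fun b hb => ?_
      refine sInf_le fun x y => ?_
      have h1 := hb (diagι x₀ x) (diagι x₀ y)
      rw [diagLift_diagι, diagLift_diagι] at h1
      exact h1.trans (mul_le_mul_right (Wp_diagι_le d hd x₀ p hp x y) b)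


end
end

section
/- For any pointed extended pseudometric space (X, d, x₀) and 1 ≤ p ≤ q ≤ ∞, the Wasserstein distances are monotone: W_q[d, x₀](α, β) ≤ W_p[d, x₀](α, β) for all persistence diagrams α, β ∈ D(X, x₀). -/
open scoped ENNReal BigOperators
noncomputable section

variable {X : Type*}

lemma sum_rpow_rpow_antitone {n : ℕ} (v : Fin n → ℝ≥0∞) {p q : ℝ}
    (hp : 0 < p) (hpq : p ≤ q) (s : Finset (Fin n)) :
    (∑ i ∈ s, v i ^ q) ^ (1/q) ≤ (∑ i ∈ s, v i ^ p) ^ (1/p) := by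
  have hq : 0 < q := hp.trans_le hpq
  induction s using Finset.induction with
  | empty => simp [ENNReal.zero_rpow_of_pos, one_div, hp, hq, inv_pos]
  | @insert a s ha ih =>
    rw [Finset.sum_insert ha, Finset.sum_insert ha]
    set B : ℝ≥0∞ := (∑ i ∈ s, v i ^ q) ^ (1/q) with hB
    have hBq : B ^ q = ∑ i ∈ s, v i ^ q := by
      rw [hB, one_div, ENNReal.rpow_inv_rpow hq.ne']
    have h1 : (v a ^ q + B ^ q) ^ (1/q) ≤ (v a ^ p + B ^ p) ^ (1/p) :=
      ENNReal.rpow_add_rpow_le (v a) B hp hpq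
    rw [hBq] at h1
    refine h1.trans ?_
    have hBp : B ^ p ≤ ∑ i ∈ s, v i ^ p := by
      calc B ^ p ≤ ((∑ i ∈ s, v i ^ p) ^ (1/p)) ^ p :=
            ENNReal.rpow_le_rpow ih hp.le
        _ = ∑ i ∈ s, v i ^ p := by rw [one_div, ENNReal.rpow_inv_rpow hp.ne']
    exact ENNReal.rpow_le_rpow (add_le_add le_rfl hBp) (by positivity)

lemma lpNorm_antitone {n : ℕ} (v : Fin n → ℝ≥0∞) {p q : ℝ≥0∞}
    (hp : 1 ≤ p) (hpq : p ≤ q) : lpNorm q v ≤ lpNorm p v := by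
  rcases eq_or_ne p ∞ with hpi | hpi
  · have : q = ∞ := top_le_iff.mp (hpi ▸ hpq)
    simp [lpNorm, hpi, this]
  have hp0 : 0 < p.toReal := ENNReal.toReal_pos (by positivity) hpi
  rcases eq_or_ne q ∞ with hqi | hqi
  · rw [lpNorm, lpNorm, if_pos hqi, if_neg hpi]
    refine iSup_le fun i => ?_
    calc v i = (v i ^ p.toReal) ^ (1 / p.toReal) := by
          rw [one_div, ENNReal.rpow_rpow_inv hp0.ne']
      _ ≤ (∑ j, v j ^ p.toReal) ^ (1 / p.toReal) :=
          ENNReal.rpow_le_rpow (Finset.single_le_sum (f := fun j => v j ^ p.toReal)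
            (fun _ _ => zero_le) (Finset.mem_univ i)) (by positivity)
  · rw [lpNorm, lpNorm, if_neg hqi, if_neg hpi]
    exact sum_rpow_rpow_antitone v hp0 (ENNReal.toReal_le_toReal hpi hqi |>.mpr hpq) _

/-- The Wasserstein distances are antitone in `p`: for `1 ≤ p ≤ q ≤ ∞`, `W_q ≤ W_p`. -/
theorem wasserstein_antitone (d : X → X → ℝ≥0∞) (hd : IsEPMetric d) (x₀ : X)
    (p q : ℝ≥0∞) (hp : 1 ≤ p) (hpq : p ≤ q) (α β : Diagram X x₀) :
    Wp d x₀ q α β ≤ Wp d x₀ p α β := by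
  refine iInf_mono fun s => iInf_mono fun t => iInf_mono fun _ => iInf_mono fun _ => ?_
  exact iInf_mono fun σ => lpNorm_antitone _ hp hpq

end
end
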